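/- arXiv:1105.5357 — 6 statements merged into one kernel-verified Lean document; each statement's English description precedes it below -/
import Mathlib

section
/- Let R be a commutative ring in which 2 is invertible, and let M be a finite free R-module with a quadratic form Q admitting an orthogonal basis e_1,…,e_m (the polar form of Q vanishes on pairs of distinct basis vectors) such that each Q(e_i) is a unit of R. For every nonempty subset {i_1 < i_2 < … < i_j} of {1,…,m}, the trace of the R-linear endomorphism of the Clifford algebra Cliff(Q) given by left multiplication by the product ι(e_{i_1})·ι(e_{i_2})⋯ι(e_{i_j}) equals 0, while the trace of left multiplication by 1 equals 2^m. -/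
namespace CliffTraceAux

open CliffordAlgebra Finset

variable {R : Type*} [CommRing R] [Invertible (2 : R)]
  {M : Type*} [AddCommGroup M] [Module R M]
  {m : ℕ} (e : Module.Basis (Fin m) R M) (Q : QuadraticForm R M)

/-- Product of the `ι (e i)` over a list of indices. -/
noncomputable def prodL (l : List (Fin m)) : CliffordAlgebra Q :=
  (l.map fun i => CliffordAlgebra.ι Q (e i)).prod

@[simp] lemma prodL_nil : prodL e Q [] = 1 := rfl

@[simp] lemma prodL_cons (i : Fin m) (l : List (Fin m)) :
    prodL e Q (i :: l) = CliffordAlgebra.ι Q (e i) * prodL e Q l := by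
  simp [prodL]

lemma prodL_append (l₁ l₂ : List (Fin m)) :
    prodL e Q (l₁ ++ l₂) = prodL e Q l₁ * prodL e Q l₂ := by
  simp [prodL]

/-- Product over a finset, indices in increasing order. -/
noncomputable def prodF (S : Finset (Fin m)) : CliffordAlgebra Q := prodL e Q (S.sort (· ≤ ·))

variable {e Q}
variable (horth : ∀ i j : Fin m, i ≠ j → QuadraticMap.polar Q (e i) (e j) = 0)

section
include horth

lemma anticomm {i j : Fin m} (hij : i ≠ j) :
    CliffordAlgebra.ι Q (e i) * CliffordAlgebra.ι Q (e j)
      = -(CliffordAlgebra.ι Q (e j) * CliffordAlgebra.ι Q (e i)) := by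
  refine CliffordAlgebra.ι_mul_ι_comm_of_isOrtho ?_
  rw [QuadraticMap.isOrtho_def, ← sub_eq_zero]
  have := horth i j hij
  rw [QuadraticMap.polar] at this
  linear_combination this

/-- Moving `ι (e k)` across a product it does not occur in. -/
lemma move_not_mem {k : Fin m} : ∀ {l : List (Fin m)}, k ∉ l →
    CliffordAlgebra.ι Q (e k) * prodL e Q l
      = ((-1 : R) ^ l.length) • (prodL e Q l * CliffordAlgebra.ι Q (e k))
  | [], _ => by simp
  | j :: t, hk => by
    have hkj : k ≠ j := fun h => hk (h ▸ List.mem_cons_self)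
    have hkt : k ∉ t := fun h => hk (List.mem_cons_of_mem _ h)
    rw [prodL_cons, ← mul_assoc, anticomm horth hkj, neg_mul, mul_assoc,
      move_not_mem hkt, mul_smul_comm, List.length_cons, ← neg_smul]
    rw [← mul_assoc]
    ring_nf

/-- Moving `ι (e k)` across a product containing it once, even length case. -/
lemma move_mem_even {k : Fin m} {l : List (Fin m)} (hnd : l.Nodup) (hk : k ∈ l)
    (hev : Even l.length) :
    CliffordAlgebra.ι Q (e k) * prodL e Q l = -(prodL e Q l * CliffordAlgebra.ι Q (e k)) := by
  obtain ⟨s, t, rfl⟩ := List.append_of_mem hk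
  rw [List.nodup_append] at hnd
  have hks : k ∉ s := fun h => hnd.2.2 k h k List.mem_cons_self rfl
  have hkt : k ∉ t := ((List.nodup_cons).1 hnd.2.1).1
  have hlen : Odd (s.length + t.length) := by
    have h : (s ++ k :: t).length = s.length + t.length + 1 := by
      simp; omega
    rw [h, Nat.even_add_one, Nat.not_even_iff_odd] at hev
    exact hev
  have ht' : prodL e Q t * CliffordAlgebra.ι Q (e k)
      = ((-1 : R) ^ t.length) • (CliffordAlgebra.ι Q (e k) * prodL e Q t) := by
    rw [move_not_mem horth hkt, smul_smul, ← pow_add,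
      Even.neg_one_pow ⟨t.length, rfl⟩, one_smul]
  have h1 : CliffordAlgebra.ι Q (e k) * prodL e Q (s ++ k :: t)
      = ((-1 : R) ^ s.length) •
        (prodL e Q s * (CliffordAlgebra.ι Q (e k) * (CliffordAlgebra.ι Q (e k) * prodL e Q t))) := by
    rw [prodL_append, ← mul_assoc, move_not_mem horth hks, smul_mul_assoc, prodL_cons,
      mul_assoc]
  have h2 : prodL e Q (s ++ k :: t) * CliffordAlgebra.ι Q (e k)
      = ((-1 : R) ^ t.length) •
        (prodL e Q s * (CliffordAlgebra.ι Q (e k) * (CliffordAlgebra.ι Q (e k) * prodL e Q t))) := by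
    rw [prodL_append, prodL_cons, mul_assoc, mul_assoc, ht', mul_smul_comm, mul_smul_comm,
      ← mul_assoc]
  rw [h1, h2, ← neg_smul]
  congr 1
  have hadd : ((-1 : R) ^ s.length) * ((-1 : R) ^ t.length) = -1 := by
    rw [← pow_add]; exact Odd.neg_one_pow hlen
  have hsq : ((-1 : R) ^ t.length) * ((-1 : R) ^ t.length) = 1 := by
    rw [← pow_add]; exact Even.neg_one_pow ⟨t.length, rfl⟩
  calc ((-1 : R) ^ s.length) = ((-1 : R) ^ s.length) * (((-1 : R) ^ t.length) * ((-1 : R) ^ t.length)) := by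
        rw [hsq, mul_one]
    _ = (((-1 : R) ^ s.length) * ((-1 : R) ^ t.length)) * ((-1 : R) ^ t.length) := by ring
    _ = -((-1 : R) ^ t.length) := by rw [hadd]; ring


omit horth in
lemma involute_prodL (l : List (Fin m)) :
    CliffordAlgebra.involute (prodL e Q l) = ((-1 : R) ^ l.length) • prodL e Q l := by
  induction l with
  | nil => simp [prodL]
  | cons i t ih =>
    rw [prodL_cons, map_mul, CliffordAlgebra.involute_ι, ih, neg_mul, mul_smul_comm,
      List.length_cons, pow_succ, mul_neg_one, neg_smul]

lemma span_aux : ∀ (l : List (Fin m)), l.Pairwise (· < ·) → ∀ i : Fin m,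
    ∃ (c : R) (l' : List (Fin m)), l'.Pairwise (· < ·) ∧ (∀ x ∈ l', x = i ∨ x ∈ l) ∧
      CliffordAlgebra.ι Q (e i) * prodL e Q l = c • prodL e Q l'
  | [], _, i => ⟨1, [i], by simp, by simp, by simp [prodL]⟩
  | j :: t, hsort, i => by
    have hts : t.Pairwise (· < ·) := hsort.of_cons
    rcases lt_trichotomy i j with hij | rfl | hij
    · refine ⟨1, i :: j :: t, List.pairwise_cons.2 ⟨?_, hsort⟩, ?_, by simp⟩
      · intro b hb
        rcases List.mem_cons.1 hb with rfl | hb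
        · exact hij
        · exact hij.trans (List.rel_of_pairwise_cons hsort hb)
      · intro x hx
        rcases List.mem_cons.1 hx with rfl | hx
        · exact Or.inl rfl
        · exact Or.inr hx
    · refine ⟨Q (e i), t, hts, fun x hx => Or.inr (List.mem_cons_of_mem _ hx), ?_⟩
      rw [prodL_cons, ← mul_assoc, CliffordAlgebra.ι_sq_scalar, ← Algebra.smul_def]
    · obtain ⟨c, t', ht's, ht'sub, ht'eq⟩ := span_aux t hts i
      have hjt' : ∀ x ∈ t', j < x := by
        intro x hx
        rcases ht'sub x hx with rfl | hx
        · exact hij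
        · exact List.rel_of_pairwise_cons hsort hx
      refine ⟨-c, j :: t', List.pairwise_cons.2 ⟨hjt', ht's⟩, ?_, ?_⟩
      · intro x hx
        rcases List.mem_cons.1 hx with rfl | hx
        · exact Or.inr (List.mem_cons_self)
        · rcases ht'sub x hx with rfl | hx
          · exact Or.inl rfl
          · exact Or.inr (List.mem_cons_of_mem _ hx)
      · rw [prodL_cons, ← mul_assoc, anticomm horth (ne_of_gt hij), neg_mul, mul_assoc,
          ht'eq, prodL_cons, mul_smul_comm, neg_smul]

omit horth in
lemma prodL_mem_span {l : List (Fin m)} (hl : l.Pairwise (· < ·)) :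
    prodL e Q l ∈ Submodule.span R (Set.range (prodF e Q)) := by
  have hnd : l.Nodup := hl.nodup
  have hle : l.Pairwise (· ≤ ·) := hl.imp le_of_lt
  have : prodF e Q l.toFinset = prodL e Q l := by
    rw [prodF, (List.toFinset_sort (· ≤ ·) hnd).2 hle]
  exact this ▸ Submodule.subset_span ⟨l.toFinset, rfl⟩

lemma span_prodF_top :
    Submodule.span R (Set.range (prodF e Q)) = ⊤ := by
  set P := Submodule.span R (Set.range (prodF e Q)) with hP
  have h1 : (1 : CliffordAlgebra Q) ∈ P := by
    have h : prodF e Q (∅ : Finset (Fin m)) = 1 := by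
      simp [prodF, Finset.sort_empty]
    exact h ▸ Submodule.subset_span ⟨∅, rfl⟩
  have hmulι : ∀ i : Fin m, ∀ y ∈ P, CliffordAlgebra.ι Q (e i) * y ∈ P := by
    intro i y hy
    induction hy using Submodule.span_induction with
    | mem y hy =>
      obtain ⟨S, rfl⟩ := hy
      obtain ⟨c, l', hl's, _, hl'eq⟩ := span_aux horth (S.sort (· ≤ ·)) (S.sortedLT_sort).pairwise i
      rw [prodF, hl'eq]
      exact Submodule.smul_mem _ _ (prodL_mem_span hl's)
    | zero => rw [mul_zero]; exact zero_mem _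
    | add a b _ _ ha hb => rw [mul_add]; exact add_mem ha hb
    | smul r a _ ha => rw [mul_smul_comm]; exact Submodule.smul_mem _ _ ha
  have hmulv : ∀ v : M, ∀ y ∈ P, CliffordAlgebra.ι Q v * y ∈ P := by
    let N : Submodule R M :=
      { carrier := {v | ∀ y ∈ P, CliffordAlgebra.ι Q v * y ∈ P}
        zero_mem' := by intro y hy; rw [map_zero, zero_mul]; exact zero_mem _
        add_mem' := by
          intro a b ha hb y hy
          rw [map_add, add_mul]
          exact add_mem (ha y hy) (hb y hy)
        smul_mem' := by
          intro r a ha y hy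
          rw [map_smul, smul_mul_assoc]
          exact Submodule.smul_mem _ _ (ha y hy) }
    have hN : ⊤ ≤ N := by
      rw [← e.span_eq]
      refine Submodule.span_le.2 ?_
      rintro _ ⟨i, rfl⟩
      exact hmulι i
    exact fun v => hN (Submodule.mem_top)
  have hmul : ∀ x : CliffordAlgebra Q, ∀ y ∈ P, x * y ∈ P := by
    intro x
    refine CliffordAlgebra.induction (fun r y hy => ?_) hmulv
      (fun a b ha hb y hy => ?_) (fun a b ha hb y hy => ?_) x
    · rw [← Algebra.smul_def]; exact Submodule.smul_mem _ _ hy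
    · rw [mul_assoc]; exact ha _ (hb y hy)
    · rw [add_mul]; exact add_mem (ha y hy) (hb y hy)
  rw [eq_top_iff]
  intro x _
  simpa using hmul x 1 h1

end

section Rep

variable (e Q)

/-- Coefficient of the action of `e i` on the basis vector indexed by `S`. -/
noncomputable def cf (i : Fin m) (S : Finset (Fin m)) : R :=
  (if i ∈ S then Q (e i) else 1) * (-1 : R) ^ (S.filter (fun j => j < i)).card

/-- Target subset: toggle membership of `i`. -/
def tgt (i : Fin m) (S : Finset (Fin m)) : Finset (Fin m) := symmDiff S {i}

variable {e Q}

lemma mem_tgt {x i : Fin m} {S : Finset (Fin m)} :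
    x ∈ tgt i S ↔ (x ∈ S ∧ ¬ x = i) ∨ (x = i ∧ x ∉ S) := by
  simp only [tgt, Finset.mem_symmDiff, Finset.mem_singleton]

lemma mem_tgt_self {i : Fin m} {S : Finset (Fin m)} : i ∈ tgt i S ↔ i ∉ S := by
  simp [mem_tgt]

lemma mem_tgt_of_ne {x i : Fin m} {S : Finset (Fin m)} (h : x ≠ i) :
    x ∈ tgt i S ↔ x ∈ S := by
  simp [mem_tgt, h]

lemma tgt_tgt {i : Fin m} {S : Finset (Fin m)} : tgt i (tgt i S) = S := by
  ext x
  by_cases hx : x = i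
  · subst hx; simp [mem_tgt_self, mem_tgt]
  · rw [mem_tgt_of_ne hx, mem_tgt_of_ne hx]

lemma tgt_comm {i j : Fin m} {S : Finset (Fin m)} : tgt i (tgt j S) = tgt j (tgt i S) := by
  simp only [tgt, symmDiff_assoc]
  rw [symmDiff_comm ({j} : Finset (Fin m)) {i}]


lemma filter_tgt {i j : Fin m} (h : ¬ j < i) (S : Finset (Fin m)) :
    (tgt j S).filter (fun x => x < i) = S.filter (fun x => x < i) := by
  ext x
  simp only [Finset.mem_filter]
  by_cases hxj : x = j
  · subst hxj
    constructor
    · rintro ⟨-, hx⟩; exact absurd hx h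
    · rintro ⟨-, hx⟩; exact absurd hx h
  · rw [mem_tgt_of_ne hxj]

lemma tgt_of_not_mem {i : Fin m} {S : Finset (Fin m)} (h : i ∉ S) :
    tgt i S = insert i S := by
  ext x
  by_cases hx : x = i
  · subst hx; simp [mem_tgt_self, h]
  · simp [mem_tgt_of_ne hx, hx]

lemma tgt_of_mem {i : Fin m} {S : Finset (Fin m)} (h : i ∈ S) :
    tgt i S = S.erase i := by
  ext x
  by_cases hx : x = i
  · subst hx; simp [mem_tgt_self, h]
  · simp [mem_tgt_of_ne hx, hx, Finset.mem_erase]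

lemma cf_mul_cf_self (i : Fin m) (S : Finset (Fin m)) :
    cf e Q i (tgt i S) * cf e Q i S = Q (e i) := by
  rw [cf, cf, filter_tgt (lt_irrefl i) S]
  have hsq : ((-1 : R) ^ (S.filter (fun j => j < i)).card)
      * ((-1 : R) ^ (S.filter (fun j => j < i)).card) = 1 := by
    rw [← pow_add]; exact Even.neg_one_pow ⟨_, rfl⟩
  by_cases h : i ∈ S
  · rw [if_pos h, if_neg (by simp [mem_tgt_self, h])]
    linear_combination Q (e i) * hsq
  · rw [if_neg h, if_pos (mem_tgt_self.2 h)]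
    linear_combination Q (e i) * hsq

lemma sgn_flip {i j : Fin m} (hij : i < j) (S : Finset (Fin m)) :
    ((-1 : R) ^ ((tgt i S).filter (fun x => x < j)).card)
      = -((-1 : R) ^ (S.filter (fun x => x < j)).card) := by
  have hT : (tgt i S).filter (fun x => x < j) = tgt i (S.filter (fun x => x < j)) := by
    ext x
    by_cases hx : x = i
    · subst hx
      simp only [Finset.mem_filter, mem_tgt_self, hij, and_true]
    · simp [mem_tgt_of_ne hx, Finset.mem_filter]
  rw [hT]
  set T := S.filter (fun x => x < j) with hTdef
  by_cases h : i ∈ T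
  · rw [tgt_of_mem h, ← Finset.card_erase_add_one h, pow_succ]
    ring
  · rw [tgt_of_not_mem h, Finset.card_insert_of_notMem h, pow_succ]
    ring

lemma cf_tgt_gt {i j : Fin m} (hij : i < j) (S : Finset (Fin m)) :
    cf e Q i (tgt j S) = cf e Q i S := by
  rw [cf, cf, filter_tgt (fun h => absurd (h.trans hij) (lt_irrefl j)) S]
  simp only [mem_tgt_of_ne (ne_of_lt hij)]

lemma cf_tgt_lt {i j : Fin m} (hij : i < j) (S : Finset (Fin m)) :
    cf e Q j (tgt i S) = -(cf e Q j S) := by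
  rw [cf, cf]
  simp only [mem_tgt_of_ne (ne_of_gt hij), sgn_flip hij]
  ring

variable (e Q) in
/-- The action of `e i` on the auxiliary module `Finset (Fin m) →₀ R`. -/
noncomputable def cOp (i : Fin m) : (Finset (Fin m) →₀ R) →ₗ[R] (Finset (Fin m) →₀ R) :=
  Finsupp.lsum R fun S => cf e Q i S • Finsupp.lsingle (tgt i S)

lemma cOp_single (i : Fin m) (S : Finset (Fin m)) (r : R) :
    cOp e Q i (Finsupp.single S r) = Finsupp.single (tgt i S) (cf e Q i S * r) := by
  rw [cOp, Finsupp.lsum_single, LinearMap.smul_apply, Finsupp.lsingle_apply,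
    Finsupp.smul_single, smul_eq_mul]

lemma cOp_cOp_self (i : Fin m) :
    cOp e Q i ∘ₗ cOp e Q i = Q (e i) • LinearMap.id := by
  apply Finsupp.lhom_ext
  intro S r
  rw [LinearMap.comp_apply, cOp_single, cOp_single, tgt_tgt, LinearMap.smul_apply,
    LinearMap.id_apply, Finsupp.smul_single, ← mul_assoc, cf_mul_cf_self, smul_eq_mul]

lemma cOp_cOp_of_lt {i j : Fin m} (hij : i < j) :
    cOp e Q i ∘ₗ cOp e Q j = -(cOp e Q j ∘ₗ cOp e Q i) := by
  apply Finsupp.lhom_ext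
  intro S r
  rw [LinearMap.comp_apply, LinearMap.neg_apply, LinearMap.comp_apply, cOp_single,
    cOp_single, cOp_single, cOp_single, tgt_comm, ← Finsupp.single_neg]
  congr 1
  rw [cf_tgt_gt hij, cf_tgt_lt hij]
  ring

lemma cOp_cOp_of_ne {i j : Fin m} (hij : i ≠ j) :
    cOp e Q i ∘ₗ cOp e Q j = -(cOp e Q j ∘ₗ cOp e Q i) := by
  rcases lt_or_gt_of_ne hij with h | h
  · exact cOp_cOp_of_lt h
  · rw [cOp_cOp_of_lt h]
    exact (neg_neg (cOp e Q i ∘ₗ cOp e Q j)).symm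

section
include horth

lemma constr_sq (v : M) :
    (e.constr R (cOp e Q)) v * (e.constr R (cOp e Q)) v
      = algebraMap R (Module.End R (Finset (Fin m) →₀ R)) (Q v) := by
  classical
  set a : Fin m → R := fun i => e.repr v i with ha
  have hv : ∑ i, a i • e i = v := e.sum_repr v
  have hFv : (e.constr R (cOp e Q)) v = ∑ i, a i • cOp e Q i := by
    conv_lhs => rw [← hv]
    rw [map_sum]
    simp only [map_smul, Module.Basis.constr_basis]
  have hsq : ∀ i : Fin m, cOp e Q i * cOp e Q i
      = Q (e i) • (1 : Module.End R (Finset (Fin m) →₀ R)) := by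
    intro i
    rw [Module.End.mul_eq_comp, cOp_cOp_self, Module.End.one_eq_id]
  have hanti : ∀ i j : Fin m, i ≠ j →
      cOp e Q i * cOp e Q j = -(cOp e Q j * cOp e Q i) := by
    intro i j hij
    rw [Module.End.mul_eq_comp, Module.End.mul_eq_comp, cOp_cOp_of_ne hij]
  set t : Fin m → Fin m → Module.End R (Finset (Fin m) →₀ R) :=
    fun i j => (a i * a j) • (cOp e Q i * cOp e Q j) with hT
  have hmul : (e.constr R (cOp e Q)) v * (e.constr R (cOp e Q)) v
      = ∑ i : Fin m, ∑ j : Fin m, t i j := by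
    rw [hFv, Finset.sum_mul_sum]
    refine Finset.sum_congr rfl fun i _ => Finset.sum_congr rfl fun j _ => ?_
    rw [hT, smul_mul_assoc, mul_smul_comm, smul_smul]
  have hkey : (∑ i : Fin m, ∑ j : Fin m, t i j) = ∑ i : Fin m, t i i := by
    have hcase : ∀ i j : Fin m, t i j + t j i = if j = i then t i i + t i i else 0 := by
      intro i j
      by_cases h : j = i
      · subst h; rw [if_pos rfl]
      · rw [if_neg h]
        show (a i * a j) • (cOp e Q i * cOp e Q j) + (a j * a i) • (cOp e Q j * cOp e Q i) = 0
        rw [mul_comm (a j) (a i), hanti i j (fun hh => h hh.symm), ← smul_add]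
        module
    have h1 : (∑ i : Fin m, ∑ j : Fin m, t i j) + (∑ i : Fin m, ∑ j : Fin m, t i j)
        = (∑ i : Fin m, t i i) + (∑ i : Fin m, t i i) := by
      have hswap : (∑ i : Fin m, ∑ j : Fin m, t i j) = ∑ i : Fin m, ∑ j : Fin m, t j i :=
        Finset.sum_comm
      calc (∑ i : Fin m, ∑ j : Fin m, t i j) + (∑ i : Fin m, ∑ j : Fin m, t i j)
          = (∑ i : Fin m, ∑ j : Fin m, t i j) + (∑ i : Fin m, ∑ j : Fin m, t j i) := by
            rw [← hswap]
        _ = ∑ i : Fin m, (∑ j : Fin m, t i j + ∑ j : Fin m, t j i) :=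
            (Finset.sum_add_distrib).symm
        _ = ∑ i : Fin m, ∑ j : Fin m, (t i j + t j i) :=
            Finset.sum_congr rfl fun i _ => (Finset.sum_add_distrib).symm
        _ = ∑ i : Fin m, (t i i + t i i) := by
            refine Finset.sum_congr rfl fun i _ => ?_
            rw [Finset.sum_congr rfl fun j _ => hcase i j,
              Finset.sum_ite_eq' Finset.univ i (fun _ => t i i + t i i),
              if_pos (Finset.mem_univ i)]
        _ = (∑ i : Fin m, t i i) + (∑ i : Fin m, t i i) := Finset.sum_add_distrib
    have h2 : (2 : R) • (∑ i : Fin m, ∑ j : Fin m, t i j)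
        = (2 : R) • (∑ i : Fin m, t i i) := by
      rw [two_smul, two_smul]; exact h1
    calc (∑ i : Fin m, ∑ j : Fin m, t i j)
        = ⅟(2 : R) • ((2 : R) • ∑ i : Fin m, ∑ j : Fin m, t i j) := (invOf_smul_smul _ _).symm
      _ = ⅟(2 : R) • ((2 : R) • ∑ i : Fin m, t i i) := by rw [h2]
      _ = ∑ i : Fin m, t i i := invOf_smul_smul _ _
  have hQv : Q v = ∑ i : Fin m, (a i * a i) • Q (e i) := by
    conv_lhs => rw [← hv]
    rw [QuadraticMap.map_sum]
    have h0 : ∑ ij ∈ Finset.univ.sym2 with ¬ ij.IsDiag,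
        Sym2.lift ⟨fun i j => QuadraticMap.polar Q (a i • e i) (a j • e j),
          fun _ _ => QuadraticMap.polar_comm _ _ _⟩ ij = 0 := by
      refine Finset.sum_eq_zero fun ij hij => ?_
      rw [Finset.mem_filter] at hij
      induction' ij using Sym2.ind with x y
      have hxy : x ≠ y := by simpa [Sym2.mk_isDiag_iff] using hij.2
      rw [Sym2.lift_mk]
      show QuadraticMap.polar (⇑Q) (a x • e x) (a y • e y) = 0
      rw [QuadraticMap.polar_smul_left, QuadraticMap.polar_smul_right, horth x y hxy]
      simp
    rw [(Finset.sum_congr rfl fun ij _ => by induction ij using Sym2.ind; rfl :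
      (∑ ij ∈ Finset.univ.sym2 with ¬ ij.IsDiag,
        QuadraticMap.polarSym2 Q (Sym2.map (fun i => a i • e i) ij)) = _).trans h0, add_zero]
    refine Finset.sum_congr rfl fun i _ => ?_
    rw [QuadraticMap.map_smul]
  rw [hmul, hkey, hQv, Algebra.algebraMap_eq_smul_one, Finset.sum_smul]
  refine Finset.sum_congr rfl fun i _ => ?_
  show (a i * a i) • (cOp e Q i * cOp e Q i) = ((a i * a i) • Q (e i)) • 1
  rw [hsq i, smul_smul, smul_eq_mul]

/-- The Clifford module representation on `Finset (Fin m) →₀ R`. -/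
noncomputable def rep : CliffordAlgebra Q →ₐ[R] Module.End R (Finset (Fin m) →₀ R) :=
  CliffordAlgebra.lift Q ⟨e.constr R (cOp e Q), constr_sq horth⟩

lemma rep_ι (v : M) : rep horth (CliffordAlgebra.ι Q v) = (e.constr R (cOp e Q)) v :=
  CliffordAlgebra.lift_ι_apply _ _ _

lemma rep_prodL : ∀ {l : List (Fin m)}, l.Pairwise (· < ·) →
    rep horth (prodL e Q l) (Finsupp.single ∅ 1) = Finsupp.single l.toFinset 1
  | [], _ => by
    rw [prodL_nil, map_one]
    simp
  | i :: t, hl => by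
    have hit : i ∉ t.toFinset := fun h =>
      absurd (List.rel_of_pairwise_cons hl (List.mem_toFinset.1 h)) (lt_irrefl i)
    rw [prodL_cons, map_mul, Module.End.mul_apply, rep_prodL hl.of_cons, rep_ι,
      Module.Basis.constr_basis, cOp_single, tgt_of_not_mem hit]
    have hcf : cf e Q i t.toFinset = 1 := by
      rw [cf, if_neg hit]
      have : t.toFinset.filter (fun j => j < i) = ∅ := by
        refine Finset.filter_eq_empty_iff.2 fun x hx => ?_
        exact asymm (List.rel_of_pairwise_cons hl (List.mem_toFinset.1 hx))
      rw [this]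
      simp
    rw [hcf, one_mul, List.toFinset_cons]

lemma prodF_li : LinearIndependent R (prodF e Q) := by
  classical
  let g : CliffordAlgebra Q →ₗ[R] (Finset (Fin m) →₀ R) :=
    (LinearMap.applyₗ (Finsupp.single (∅ : Finset (Fin m)) (1 : R))).comp
      (rep horth).toLinearMap
  apply LinearIndependent.of_comp g
  have hg : g ∘ prodF e Q = fun S : Finset (Fin m) => Finsupp.single S (1 : R) := by
    funext S
    have h := rep_prodL horth (S.sortedLT_sort).pairwise
    rw [Finset.sort_toFinset] at h
    simpa [g, prodF] using h
  rw [hg]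
  have := (Finsupp.basisSingleOne (R := R) (ι := Finset (Fin m))).linearIndependent
  rwa [Finsupp.coe_basisSingleOne] at this

/-- The basis of the Clifford algebra indexed by subsets. -/
noncomputable def cliffBasis : Module.Basis (Finset (Fin m)) R (CliffordAlgebra Q) :=
  Module.Basis.mk (prodF_li horth) (span_prodF_top horth).ge

end

end Rep

end CliffTraceAux


open CliffTraceAux in
/-- Let `R` be a commutative ring with `2` invertible and `M` a finite free
`R`-module with a quadratic form `Q` admitting an orthogonal basis `e : Fin m → M` whose values
`Q (e i)` are units.  For every nonempty subset `S` of `{1,…,m}`, the trace of left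
multiplication on the Clifford algebra by the product `ι(e_{i₁}) ⋯ ι(e_{i_j})`
(indices in increasing order) is `0`, while the trace of left multiplication by `1` is `2^m`. -/
theorem clifford_trace_of_basis_products
    {R : Type*} [CommRing R] [Invertible (2 : R)]
    {M : Type*} [AddCommGroup M] [Module R M]
    {m : ℕ} (e : Module.Basis (Fin m) R M) (Q : QuadraticForm R M)
    (horth : ∀ i j : Fin m, i ≠ j → QuadraticMap.polar Q (e i) (e j) = 0)
    (hunit : ∀ i : Fin m, IsUnit (Q (e i))) :
    (∀ S : Finset (Fin m), S.Nonempty →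
      LinearMap.trace R (CliffordAlgebra Q)
        (LinearMap.mulLeft R
          (((S.sort (· ≤ ·)).map (fun i => CliffordAlgebra.ι Q (e i))).prod)) = 0) ∧
    LinearMap.trace R (CliffordAlgebra Q)
      (LinearMap.mulLeft R (1 : CliffordAlgebra Q)) = 2 ^ m := by
  classical
  have B := cliffBasis horth
  haveI : Module.Free R (CliffordAlgebra Q) := Module.Free.of_basis B
  haveI : Module.Finite R (CliffordAlgebra Q) := Module.Finite.of_basis B
  constructor
  · intro S hS
    have hxdef : ((S.sort (· ≤ ·)).map (fun i => CliffordAlgebra.ι Q (e i))).prod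
        = prodL e Q (S.sort (· ≤ ·)) := rfl
    rw [hxdef]
    set x := prodL e Q (S.sort (· ≤ ·)) with hx
    set T := LinearMap.trace R (CliffordAlgebra Q) (LinearMap.mulLeft R x) with hT
    rcases Nat.even_or_odd S.card with hev | hodd
    · -- even case: conjugate by `ι (e k)` for `k ∈ S`
      obtain ⟨k, hk⟩ := hS
      set u := CliffordAlgebra.ι Q (e k) with hu
      have hanti : u * x = -(x * u) := by
        refine move_mem_even horth (Finset.sort_nodup _ _) ?_ ?_
        · exact (Finset.mem_sort _).2 hk
        · rwa [Finset.length_sort]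
      have husq : u * u = algebraMap R _ (Q (e k)) := CliffordAlgebra.ι_sq_scalar Q (e k)
      have hml : ∀ y : CliffordAlgebra Q, LinearMap.mulLeft R (Q (e k) • y)
          = Q (e k) • LinearMap.mulLeft R y := by
        intro y; ext z; simp [smul_mul_assoc]
      have h1 : u * u * x = Q (e k) • x := by
        rw [husq]; exact (Algebra.smul_def _ x).symm
      have h2 : u * x * u = -(Q (e k) • x) := by
        rw [hanti, neg_mul, mul_assoc, husq, ← Algebra.commutes, ← Algebra.smul_def]
      have h3 : LinearMap.trace R (CliffordAlgebra Q) (LinearMap.mulLeft R (u * u * x))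
          = LinearMap.trace R (CliffordAlgebra Q) (LinearMap.mulLeft R (u * x * u)) := by
        calc LinearMap.trace R (CliffordAlgebra Q) (LinearMap.mulLeft R (u * u * x))
            = LinearMap.trace R (CliffordAlgebra Q)
              (LinearMap.mulLeft R u * LinearMap.mulLeft R (u * x)) := by
              rw [mul_assoc, LinearMap.mulLeft_mul, ← Module.End.mul_eq_comp]
          _ = LinearMap.trace R (CliffordAlgebra Q)
              (LinearMap.mulLeft R (u * x) * LinearMap.mulLeft R u) :=
              LinearMap.trace_mul_comm R _ _
          _ = _ := by rw [Module.End.mul_eq_comp, ← LinearMap.mulLeft_mul]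
      rw [h1, h2, hml, map_smul] at h3
      have h4 : LinearMap.mulLeft R (-(Q (e k) • x)) = -(Q (e k) • LinearMap.mulLeft R x) := by
        ext z; simp [smul_mul_assoc, neg_mul]
      rw [h4, map_neg, map_smul] at h3
      have h5 : (2 : R) * (Q (e k) * T) = 0 := by
        have : Q (e k) • T = -(Q (e k) • T) := h3
        rw [smul_eq_mul] at this
        linear_combination this
      have h6 : Q (e k) * T = 0 := by
        have := congrArg (fun z => ⅟(2 : R) * z) h5
        simpa [← mul_assoc] using this
      exact ((hunit k).mul_right_eq_zero).1 h6
    · -- odd case: use the grade involution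
      have hinv : CliffordAlgebra.involute x = -x := by
        rw [hx, involute_prodL, Finset.length_sort, Odd.neg_one_pow hodd, neg_one_smul]
      have hconj : LinearMap.mulLeft R (CliffordAlgebra.involute x)
          = (CliffordAlgebra.involuteEquiv (Q := Q)).toLinearEquiv.conj
              (LinearMap.mulLeft R x) := by
        ext y
        simp only [LinearMap.mulLeft_apply, LinearEquiv.conj_apply, LinearMap.comp_apply,
          LinearEquiv.coe_coe, AlgEquiv.toLinearEquiv_apply]
        show CliffordAlgebra.involute x * y
          = CliffordAlgebra.involuteEquiv (x * (CliffordAlgebra.involuteEquiv.symm y))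
        rw [map_mul]
        congr 1
        exact ((CliffordAlgebra.involuteEquiv (Q := Q)).apply_symm_apply y).symm
      have h3 : T = LinearMap.trace R (CliffordAlgebra Q)
          (LinearMap.mulLeft R (CliffordAlgebra.involute x)) := by
        rw [hconj, LinearMap.trace_conj']
      rw [hinv] at h3
      have h4 : LinearMap.mulLeft R (-x) = -LinearMap.mulLeft R x := by
        ext z; simp [neg_mul]
      rw [h4, map_neg] at h3
      have h5 : (2 : R) * T = 0 := by linear_combination h3
      have := congrArg (fun z => ⅟(2 : R) * z) h5
      simpa [← mul_assoc] using this
  · rcases subsingleton_or_nontrivial R with hR | hR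
    · exact Subsingleton.elim _ _
    · rw [LinearMap.mulLeft_one, LinearMap.trace_id, Module.finrank_eq_card_basis B,
        Fintype.card_finset, Fintype.card_fin]
      push_cast
      ring
end

section
/- Let R be a commutative Noetherian ring, I ⊆ R an ideal, and s ∈ R a prime element which is not a zero divisor and whose image in R/I is not a unit. Then for every n ≥ 1 the quotient R/(s^n) is separated for the I-adic topology; equivalently, if x ∈ R satisfies x ∈ I^k + (s^n) for every k ≥ 0, then x ∈ (s^n). -/
private lemma pow_prime_dvd_of_dvd_mul {R : Type*} [CommRing R] {s : R}
    (hs : Prime s) (hnzd : s ∈ nonZeroDivisors R) :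
    ∀ n : ℕ, ∀ a b : R, ¬ s ∣ a → s ^ n ∣ a * b → s ^ n ∣ b := by
  intro n
  induction n with
  | zero => intro a b _ _; simp
  | succ m ih =>
    intro a b ha hd
    have h1 : s ∣ a * b := dvd_trans (dvd_pow_self s (Nat.succ_ne_zero m)) hd
    rcases (hs.2.2 a b h1).resolve_left ha with ⟨c, rfl⟩
    obtain ⟨d, hd'⟩ := hd
    have hcancel : a * c = s ^ m * d := by
      have h2 : s * (a * c) = s * (s ^ m * d) := by linear_combination hd'
      exact (mul_cancel_left_mem_nonZeroDivisors hnzd).mp h2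
    obtain ⟨e, he⟩ := ih a c ha ⟨d, hcancel⟩
    exact ⟨e, by rw [he]; ring⟩

/-- Let `R` be a commutative Noetherian ring, `I ⊆ R` an ideal and `s ∈ R`
a prime element which is not a zero divisor and whose image in `R/I` is not a unit.  Then for
every `n ≥ 1` the quotient `R/(sⁿ)` is separated for the `I`-adic topology: if
`x ∈ I^k + (sⁿ)` for every `k`, then `x ∈ (sⁿ)`. -/
theorem quotient_by_prime_power_is_I_adically_separated
    {R : Type*} [CommRing R] [IsNoetherianRing R]
    (I : Ideal R) (s : R) (hs : Prime s) (hnzd : s ∈ nonZeroDivisors R)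
    (hu : ¬ IsUnit (Ideal.Quotient.mk I s)) :
    ∀ n : ℕ, 1 ≤ n → ∀ x : R,
      (∀ k : ℕ, x ∈ I ^ k + Ideal.span {s ^ n}) → x ∈ Ideal.span {s ^ n} := by
  intro n hn x hx
  set J : Ideal R := Ideal.span {s ^ n} with hJ
  let Q := R ⧸ J
  let f : R →+* Q := Ideal.Quotient.mk J
  let I' : Ideal Q := I.map f
  -- the image of x lies in every power of I'
  have hmem : f x ∈ (⨅ k : ℕ, I' ^ k • (⊤ : Submodule Q Q)) := by
    rw [Submodule.mem_iInf]
    intro k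
    rw [Ideal.smul_eq_mul, Ideal.mul_top]
    have := hx k
    rw [Submodule.add_eq_sup] at this
    have : f x ∈ (I ^ k + J).map f := Ideal.mem_map_of_mem f (hx k)
    rwa [Submodule.add_eq_sup, Ideal.map_sup, Ideal.map_pow, Ideal.map_quotient_self, sup_bot_eq] at this
  rw [Ideal.mem_iInf_smul_pow_eq_bot_iff] at hmem
  obtain ⟨⟨r, hr⟩, hrx⟩ := hmem
  -- lift r to an element of I
  obtain ⟨r₀, hr₀I, hr₀⟩ := Ideal.mem_map_iff_of_surjective f Ideal.Quotient.mk_surjective |>.mp hr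
  -- (1 - r₀) * x ∈ J
  have hkey : s ^ n ∣ (1 - r₀) * x := by
    rw [← Ideal.mem_span_singleton, ← hJ]
    have : f ((1 - r₀) * x) = 0 := by
      have : f r₀ * f x = f x := by rw [hr₀]; exact hrx
      push_cast [map_mul, map_sub, map_one]
      linear_combination -this
    rwa [← Ideal.Quotient.eq_zero_iff_mem]
  -- s does not divide 1 - r₀
  have hnd : ¬ s ∣ (1 - r₀) := by
    rintro ⟨t, ht⟩
    apply hu
    have h1 : (Ideal.Quotient.mk I) (1 - r₀) = 1 := by
      rw [map_sub, map_one, Ideal.Quotient.eq_zero_iff_mem.mpr hr₀I, sub_zero]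
    exact IsUnit.of_mul_eq_one (Ideal.Quotient.mk I t) (by rw [← map_mul, ← ht, h1])
  rw [Ideal.mem_span_singleton]
  exact pow_prime_dvd_of_dvd_mul hs hnzd n (1 - r₀) x hnd hkey
end

section
/- Let R be a commutative Noetherian ring, I ⊆ R an ideal, and s ∈ R a prime element which is not a zero divisor and whose image in R/I is not a unit. Let a ∈ R and n ≥ 0. If the image of a under the canonical ring homomorphism R → \hat{R} into the I-adic completion \hat{R} = lim_k R/I^k is divisible by s^n in \hat{R}, then s^n divides a in R. -/
private lemma pow_dvd_of_dvd_mul_left' {R : Type*} [CommRing R] {s x a : R}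
    (hs : Prime s) (hnzd : s ∈ nonZeroDivisors R) (hx : ¬ s ∣ x) :
    ∀ n : ℕ, s ^ n ∣ x * a → s ^ n ∣ a := by
  intro n
  induction n generalizing a with
  | zero => intro _; simp
  | succ n ih =>
    rintro ⟨c, hc⟩
    have h1 : s ∣ x * a := dvd_trans (dvd_pow_self s (Nat.succ_ne_zero n)) ⟨c, hc⟩
    rcases (hs.dvd_mul.mp h1).resolve_left hx with ⟨a', rfl⟩
    have hcancel : x * a' = s ^ n * c := by
      have : s * (x * a') = s * (s ^ n * c) := by ring_nf; ring_nf at hc; linear_combination hc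
      exact mul_cancel_left_mem_nonZeroDivisors hnzd |>.mp this
    obtain ⟨d, hd⟩ := ih ⟨c, hcancel⟩
    exact ⟨d, by rw [hd]; ring⟩

/-- Let `R` be a commutative Noetherian ring, `I ⊆ R` an ideal and `s ∈ R`
a prime element which is not a zero divisor and whose image in `R/I` is not a unit.  If the
image of `a ∈ R` in the `I`-adic completion `R̂` is divisible by `sⁿ` there, then `sⁿ`
already divides `a` in `R`. -/
theorem dvd_of_dvd_adicCompletion
    {R : Type*} [CommRing R] [IsNoetherianRing R]
    (I : Ideal R) (s : R) (hs : Prime s) (hnzd : s ∈ nonZeroDivisors R)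
    (hu : ¬ IsUnit (Ideal.Quotient.mk I s))
    (a : R) (n : ℕ)
    (hdvd : (algebraMap R (AdicCompletion I R) s) ^ n ∣
      algebraMap R (AdicCompletion I R) a) :
    s ^ n ∣ a := by
  obtain ⟨b, hb⟩ := hdvd
  set J : Ideal R := Ideal.span {s ^ n}
  -- for every k, a ∈ J + I ^ k
  have hmem : ∀ k : ℕ, a ∈ J ⊔ I ^ k := by
    intro k
    have h1 := congrArg (AdicCompletion.evalₐ I k) hb
    simp only [map_mul, map_pow, AlgHom.commutes] at h1
    obtain ⟨t, ht⟩ := Ideal.Quotient.mk_surjective (AdicCompletion.evalₐ I k b)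
    have h2 : Ideal.Quotient.mk (I ^ k) a = Ideal.Quotient.mk (I ^ k) (s ^ n * t) := by
      rw [map_mul, map_pow, ht]
      simpa using h1
    have h3 : a - s ^ n * t ∈ I ^ k := by
      rwa [Ideal.Quotient.mk_eq_mk_iff_sub_mem] at h2
    have h4 : s ^ n * t ∈ J := Ideal.mul_mem_right _ _ (Ideal.subset_span rfl)
    have : a = s ^ n * t + (a - s ^ n * t) := by ring
    rw [this]
    exact Ideal.add_mem _ (Ideal.mem_sup_left h4) (Ideal.mem_sup_right h3)
  -- pass to the quotient M = R ⧸ J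
  have hMmem : (Ideal.Quotient.mk J a : R ⧸ J) ∈
      (⨅ i : ℕ, I ^ i • ⊤ : Submodule R (R ⧸ J)) := by
    rw [Submodule.mem_iInf]
    intro k
    rcases Submodule.mem_sup.mp (hmem k) with ⟨x, hx, y, hy, hxy⟩
    have : (Ideal.Quotient.mk J a : R ⧸ J) = y • (Ideal.Quotient.mk J 1) := by
      rw [← hxy]
      simp only [map_add, Ideal.Quotient.eq_zero_iff_mem.mpr hx, zero_add]
      rw [Algebra.smul_def, Ideal.Quotient.algebraMap_eq, map_one, mul_one]
    rw [this]
    exact Submodule.smul_mem_smul hy trivial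
  obtain ⟨r, hr⟩ := (Ideal.mem_iInf_smul_pow_eq_bot_iff (I := I) _).mp hMmem
  -- (1 - r) * a ∈ J
  have h5 : (1 - (r : R)) * a ∈ J := by
    rw [← Ideal.Quotient.eq_zero_iff_mem, map_mul, map_sub, map_one]
    have : (Ideal.Quotient.mk J) (r : R) * (Ideal.Quotient.mk J) a
        = (Ideal.Quotient.mk J) a := by
      have := hr
      rwa [Algebra.smul_def, Ideal.Quotient.algebraMap_eq] at this
    rw [sub_mul, one_mul, this, sub_self]
  obtain ⟨c, hc⟩ := Ideal.mem_span_singleton'.mp h5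
  -- s does not divide 1 - r
  have hnd : ¬ s ∣ (1 - (r : R)) := by
    rintro ⟨c, hc⟩
    apply hu
    refine IsUnit.of_mul_eq_one (Ideal.Quotient.mk I c) ?_
    rw [← map_mul, ← hc, map_sub, map_one, Ideal.Quotient.eq_zero_iff_mem.mpr r.2, sub_zero]
  exact pow_dvd_of_dvd_mul_left' hs hnzd hnd n ⟨c, by rw [← hc]; ring⟩
end

section
/- Let p be a prime and N ≥ 1 an integer with p ∤ N, and let C be the matrix ((1 + N²/p, N/p), (N, 1)), an element of SL₂(ℚ). Then for every integer k ≥ 1 the trace of C^k is a nonzero rational number of p-adic valuation exactly −k; in particular C^k does not have p-integral entries, so C^k ∉ SL₂(ℤ) for all k ≥ 1. -/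
private lemma aux_sq {R : Type*} [CommRing R] (a : R) :
    (!![a^2, a; 0, 0] : Matrix (Fin 2) (Fin 2) R) * !![a^2, a; 0, 0] = a^2 • !![a^2, a; 0, 0] := by
  ext i j
  fin_cases i <;> fin_cases j <;> simp [Matrix.mul_apply, Fin.sum_univ_two]

private lemma aux_pow {R : Type*} [CommRing R] (a : R) :
    ∀ k : ℕ, (!![a^2, a; 0, 0] : Matrix (Fin 2) (Fin 2) R)^(k+1) = (a^2)^k • !![a^2, a; 0, 0] := by
  intro k
  induction k with
  | zero => simp
  | succ n ih =>
    rw [pow_succ, ih, Matrix.smul_mul, aux_sq, smul_smul, ← pow_succ]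

private lemma aux_pos (B : Matrix (Fin 2) (Fin 2) ℤ) (hB : ∀ i j, 0 < B i j) :
    ∀ k, 1 ≤ k → ∀ i j, 0 < (B^k) i j := by
  intro k
  induction k with
  | zero => omega
  | succ n ih =>
    intro _ i j
    rcases Nat.eq_zero_or_pos n with h | h
    · subst h; simpa using hB i j
    · rw [pow_succ, Matrix.mul_apply]
      exact Finset.sum_pos (fun l _ => mul_pos (ih h i l) (hB l j)) Finset.univ_nonempty

/-- Let `p` be a prime not dividing `N ≥ 1`, and
`C = ((1 + N²/p, N/p), (N, 1)) ∈ SL₂(ℚ)`.  For every `k ≥ 1` the trace of `C^k` is a nonzero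
rational of `p`-adic valuation exactly `-k`; in particular `C^k` has a non-`p`-integral entry
and `C^k` is not (the image of) an element of `SL₂(ℤ)`. -/
theorem trace_pow_valuation_of_parabolic_product
    (p N : ℕ) (hp : p.Prime) (hN : 1 ≤ N) (hpN : ¬ p ∣ N)
    (C : Matrix (Fin 2) (Fin 2) ℚ)
    (hC : C = !![1 + (N : ℚ) ^ 2 / (p : ℚ), (N : ℚ) / (p : ℚ); (N : ℚ), 1]) :
    ∀ k : ℕ, 1 ≤ k →
      Matrix.trace (C ^ k) ≠ 0 ∧
      padicValRat p (Matrix.trace (C ^ k)) = -(k : ℤ) ∧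
      (∃ i j : Fin 2, (C ^ k) i j ≠ 0 ∧ padicValRat p ((C ^ k) i j) < 0) ∧
      ¬ ∃ A : Matrix.SpecialLinearGroup (Fin 2) ℤ,
          (A : Matrix (Fin 2) (Fin 2) ℤ).map ((↑) : ℤ → ℚ) = C ^ k := by
  have : Fact p.Prime := ⟨hp⟩
  have hp0 : (p : ℚ) ≠ 0 := Nat.cast_ne_zero.mpr hp.pos.ne'
  set B : Matrix (Fin 2) (Fin 2) ℤ := !![(p : ℤ) + (N : ℤ)^2, (N : ℤ); (p : ℤ) * N, (p : ℤ)] with hB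
  have hBpos : ∀ i j, 0 < B i j := by
    intro i j
    have h1 : (0:ℤ) < p := by exact_mod_cast hp.pos
    have h2 : (0:ℤ) < N := by exact_mod_cast hN
    fin_cases i <;> fin_cases j <;> simp [hB] <;> nlinarith [hp.pos, hN]
  have hCB : C = ((p : ℚ)⁻¹) • (B.map ((↑) : ℤ → ℚ)) := by
    rw [hC]
    ext i j
    fin_cases i <;> fin_cases j <;>
      field_simp [hB, Matrix.map_apply] <;> simp [hB] <;> field_simp
  have hCk : ∀ k : ℕ, C ^ k = ((p : ℚ)⁻¹)^k • ((B^k).map ((↑) : ℤ → ℚ)) := by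
    intro k
    rw [hCB, smul_pow]
    congr 1
    simp [← Int.coe_castRingHom, ← RingHom.mapMatrix_apply, ← map_pow]
  have htr : ∀ k, 1 ≤ k → ¬ (p : ℤ) ∣ (B^k).trace := by
    intro k hk hdvd
    obtain ⟨m, rfl⟩ : ∃ m, k = m + 1 := ⟨k - 1, by omega⟩
    set a : ZMod p := (N : ZMod p) with ha
    have haz : a ≠ 0 := by
      simpa [ha, ZMod.natCast_eq_zero_iff] using hpN
    have hmap : (B.map ((↑) : ℤ → ZMod p)) = !![a^2, a; 0, 0] := by
      ext i j
      fin_cases i <;> fin_cases j <;> simp [hB, ha, Matrix.map_apply]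

    have hmappow : ((B^(m+1)).map ((↑) : ℤ → ZMod p)) = (B.map ((↑) : ℤ → ZMod p))^(m+1) := by
      simp [← Int.coe_castRingHom, ← RingHom.mapMatrix_apply, ← map_pow]
    have h1 : (((B^(m+1)).trace : ℤ) : ZMod p) = ((B^(m+1)).map ((↑) : ℤ → ZMod p)).trace := by
      simp [Matrix.trace_fin_two, Matrix.map_apply]
    rw [hmappow, hmap, aux_pow] at h1
    have h2 : (((B^(m+1)).trace : ℤ) : ZMod p) = 0 :=
      (ZMod.intCast_zmod_eq_zero_iff_dvd _ _).mpr hdvd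
    rw [h1, Matrix.trace_smul, Matrix.trace_fin_two] at h2
    simp only [Matrix.cons_val', Matrix.cons_val_zero, Matrix.empty_val',
      Matrix.cons_val_fin_one, Matrix.cons_val_one, Matrix.head_cons, Matrix.head_fin_const,
      smul_eq_mul] at h2
    have h3 : (a^2)^m * (a^2 + 0) = 0 := by simpa using h2
    rcases mul_eq_zero.mp h3 with h | h
    · rcases Nat.eq_zero_or_pos m with hm | hm
      · subst hm; simp at h
      · exact haz ((pow_eq_zero_iff two_ne_zero).mp ((pow_eq_zero_iff hm.ne').mp h))
    · exact haz ((pow_eq_zero_iff two_ne_zero).mp (by simpa using h))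
  intro k hk
  have hTpos : (0:ℤ) < (B^k).trace := by
    rw [Matrix.trace_fin_two]
    have := aux_pos B hBpos k hk
    exact add_pos (this 0 0) (this 1 1)
  have hTrQ : Matrix.trace (C^k) = ((p : ℚ)⁻¹)^k * (((B^k).trace : ℤ) : ℚ) := by
    rw [hCk k, Matrix.trace_smul, smul_eq_mul, Matrix.trace_fin_two, Matrix.trace_fin_two]
    simp [Matrix.map_apply]
  have hTQ0 : (((B^k).trace : ℤ) : ℚ) ≠ 0 := by exact_mod_cast hTpos.ne'
  have hppow : ((p : ℚ)⁻¹)^k ≠ 0 := pow_ne_zero _ (inv_ne_zero hp0)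
  have hne : Matrix.trace (C^k) ≠ 0 := by
    rw [hTrQ]; exact mul_ne_zero hppow hTQ0
  have hvalT : padicValRat p (((B^k).trace : ℤ) : ℚ) = 0 := by
    rw [padicValRat.of_int, padicValInt.eq_zero_of_not_dvd (htr k hk)]
    simp
  have hval : padicValRat p (Matrix.trace (C^k)) = -(k : ℤ) := by
    rw [hTrQ, padicValRat.mul hppow hTQ0, hvalT, add_zero,
      padicValRat.pow ((p : ℚ)⁻¹), padicValRat.inv, padicValRat.self hp.one_lt]
    ring
  have hentry : ∃ i j : Fin 2, (C^k) i j ≠ 0 ∧ padicValRat p ((C^k) i j) < 0 := by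
    by_contra h
    push_neg at h
    have key : ∀ i : Fin 2, (C^k) i i ≠ 0 → 0 ≤ padicValRat p ((C^k) i i) := fun i hi => h i i hi
    have htr2 : Matrix.trace (C^k) = (C^k) 0 0 + (C^k) 1 1 := Matrix.trace_fin_two _
    have hneg : padicValRat p (Matrix.trace (C^k)) < 0 := by
      rw [hval]; omega
    rcases eq_or_ne ((C^k) 0 0) 0 with h0 | h0
    · rcases eq_or_ne ((C^k) 1 1) 0 with h1 | h1
      · exact hne (by rw [htr2, h0, h1, add_zero])
      · have := key 1 h1
        rw [htr2, h0, zero_add] at hneg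
        omega
    · rcases eq_or_ne ((C^k) 1 1) 0 with h1 | h1
      · have := key 0 h0
        rw [htr2, h1, add_zero] at hneg
        omega
      · have hmin := padicValRat.min_le_padicValRat_add (p := p)
          (q := (C^k) 0 0) (r := (C^k) 1 1) (htr2 ▸ hne)
        rw [← htr2] at hmin
        have := le_min (key 0 h0) (key 1 h1)
        omega
  refine ⟨hne, hval, hentry, ?_⟩
  rintro ⟨A, hA⟩
  obtain ⟨i, j, hij0, hijv⟩ := hentry
  have hent : (C^k) i j = (((A : Matrix (Fin 2) (Fin 2) ℤ) i j : ℤ) : ℚ) := by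
    rw [← hA, Matrix.map_apply]
  rw [hent, padicValRat.of_int] at hijv
  omega
end

section
/- Let k be a field and n ≥ 1 an integer. For each index j ∈ {1,…,n}, let T_j be the substitution endomorphism of the formal power series ring k⟦z₁,…,z_n⟧ determined by z_j ↦ z_j and z_i ↦ z_i·z_j for all i ≠ j. Then for every nonzero formal power series f ∈ k⟦z₁,…,z_n⟧ there exist a finite sequence of indices j₁,…,j_r ∈ {1,…,n}, exponents a₁,…,a_n ∈ ℕ, and a power series g ∈ k⟦z₁,…,z_n⟧ with nonzero constant term, such that T_{j_r}(⋯(T_{j_1}(f))⋯) = z₁^{a₁}⋯z_n^{a_n}·g. -/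
/-- The substitution endomorphism `T_j` of `k⟦z₁,…,z_n⟧` determined by `z_j ↦ z_j` and
`z_i ↦ z_i·z_j` for `i ≠ j`, described coefficientwise: the monomial `z^d` is sent to the
monomial `z^d'` with `d'_i = d_i` for `i ≠ j` and `d'_j = ∑ᵢ d_i`, so the coefficient of
`T_j f` at an exponent `e` is the coefficient of `f` at the (unique) preimage exponent,
when it exists, and `0` otherwise. -/
noncomputable def substMulVar {k : Type*} [CommRing k] {n : ℕ} (j : Fin n)
    (f : MvPowerSeries (Fin n) k) : MvPowerSeries (Fin n) k :=
  fun e : Fin n →₀ ℕ =>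
    if (∑ i ∈ Finset.univ.erase j, e i) ≤ e j then
      MvPowerSeries.coeff
        (Finsupp.update e j (e j - ∑ i ∈ Finset.univ.erase j, e i)) f
    else 0

namespace Monomialization

open Finset MvPowerSeries

variable {k : Type*} [CommRing k] {n : ℕ}

/-- The exponent map induced by `substMulVar j` on monomials. -/
noncomputable def phi (j : Fin n) (d : Fin n →₀ ℕ) : Fin n →₀ ℕ :=
  Finsupp.update d j (∑ i, d i)

lemma phi_apply_ne (j : Fin n) (d : Fin n →₀ ℕ) {i : Fin n} (h : i ≠ j) :
    phi j d i = d i := by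
  classical
  simp [phi, Function.update_of_ne h]

lemma phi_apply_self (j : Fin n) (d : Fin n →₀ ℕ) :
    phi j d j = ∑ i, d i := by
  classical
  simp [phi]

lemma sum_erase_phi (j : Fin n) (d : Fin n →₀ ℕ) :
    ∑ i ∈ Finset.univ.erase j, phi j d i = ∑ i ∈ Finset.univ.erase j, d i :=
  Finset.sum_congr rfl fun i hi => phi_apply_ne j d (Finset.mem_erase.mp hi).1

lemma sum_erase_add (j : Fin n) (d : Fin n →₀ ℕ) :
    (∑ i ∈ Finset.univ.erase j, d i) + d j = ∑ i, d i :=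
  Finset.sum_erase_add _ _ (Finset.mem_univ j)

lemma substMulVar_apply_phi (j : Fin n) (f : MvPowerSeries (Fin n) k) (d : Fin n →₀ ℕ) :
    substMulVar j f (phi j d) = f d := by
  classical
  have hS : ∑ i ∈ Finset.univ.erase j, phi j d i = ∑ i ∈ Finset.univ.erase j, d i :=
    sum_erase_phi j d
  have hj : phi j d j = ∑ i, d i := phi_apply_self j d
  have hle : (∑ i ∈ Finset.univ.erase j, phi j d i) ≤ phi j d j := by
    rw [hS, hj, ← sum_erase_add j d]; exact Nat.le_add_right _ _
  rw [substMulVar, if_pos hle, MvPowerSeries.coeff_apply]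
  congr 1
  have hsub : phi j d j - ∑ i ∈ Finset.univ.erase j, phi j d i = d j := by
    rw [hS, hj, ← sum_erase_add j d]; omega
  rw [hsub, phi, Finsupp.update_idem, Finsupp.update_self]

lemma substMulVar_ne_zero {j : Fin n} {f : MvPowerSeries (Fin n) k} {e : Fin n →₀ ℕ}
    (h : substMulVar j f e ≠ 0) : ∃ d, f d ≠ 0 ∧ e = phi j d := by
  classical
  rw [substMulVar] at h
  split_ifs at h with hle
  · refine ⟨Finsupp.update e j (e j - ∑ i ∈ Finset.univ.erase j, e i), h, ?_⟩
    set S := ∑ i ∈ Finset.univ.erase j, e i with hSdef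
    set d := Finsupp.update e j (e j - S) with hd
    have hdne : ∀ i, i ≠ j → d i = e i := by
      intro i hi
      simp [hd, Function.update_of_ne hi]
    have hdj : d j = e j - S := by simp [hd]
    have hSd : ∑ i ∈ Finset.univ.erase j, d i = S := by
      rw [hSdef]
      exact Finset.sum_congr rfl fun i hi => hdne i (Finset.mem_erase.mp hi).1
    have hsum : ∑ i, d i = e j := by
      rw [← sum_erase_add j d, hSd, hdj]; omega
    rw [phi, hsum, hd, Finsupp.update_idem, Finsupp.update_self]
  · exact absurd rfl h

lemma phi_mono (j : Fin n) {d e : Fin n →₀ ℕ} (h : d ≤ e) : phi j d ≤ phi j e := by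
  rw [Finsupp.le_def] at h ⊢
  intro i
  by_cases hi : i = j
  · subst hi
    rw [phi_apply_self, phi_apply_self]
    exact Finset.sum_le_sum fun i _ => h i
  · rw [phi_apply_ne j d hi, phi_apply_ne j e hi]
    exact h i

/-- Iterated exponent map. -/
noncomputable def Phi (l : List (Fin n)) (d : Fin n →₀ ℕ) : Fin n →₀ ℕ :=
  l.foldl (fun x j => phi j x) d

@[simp] lemma Phi_nil (d : Fin n →₀ ℕ) : Phi [] d = d := rfl

lemma Phi_cons (j : Fin n) (l : List (Fin n)) (d : Fin n →₀ ℕ) :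
    Phi (j :: l) d = Phi l (phi j d) := rfl

lemma Phi_append (l l' : List (Fin n)) (d : Fin n →₀ ℕ) :
    Phi (l ++ l') d = Phi l' (Phi l d) := List.foldl_append

lemma Phi_mono (l : List (Fin n)) {d e : Fin n →₀ ℕ} (h : d ≤ e) : Phi l d ≤ Phi l e := by
  induction l generalizing d e with
  | nil => exact h
  | cons j t ih => exact ih (phi_mono j h)

lemma foldl_substMulVar_phi (l : List (Fin n)) (f : MvPowerSeries (Fin n) k) (d : Fin n →₀ ℕ) :
    (l.foldl (fun h j => substMulVar j h) f) (Phi l d) = f d := by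
  induction l generalizing f d with
  | nil => rfl
  | cons j t ih =>
    rw [List.foldl_cons, Phi_cons]
    rw [ih (substMulVar j f) (phi j d), substMulVar_apply_phi]

lemma foldl_substMulVar_ne_zero (l : List (Fin n)) (f : MvPowerSeries (Fin n) k)
    (e : Fin n →₀ ℕ) (h : (l.foldl (fun h j => substMulVar j h) f) e ≠ 0) :
    ∃ d, f d ≠ 0 ∧ e = Phi l d := by
  induction l generalizing f e with
  | nil => exact ⟨e, h, rfl⟩
  | cons j t ih =>
    rw [List.foldl_cons] at h
    obtain ⟨d', hd', he⟩ := ih (substMulVar j f) e h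
    obtain ⟨d, hd, hd'eq⟩ := substMulVar_ne_zero hd'
    exact ⟨d, hd, by rw [he, hd'eq, ← Phi_cons]⟩



lemma pair_aux (N : ℕ) : ∀ d e : Fin n →₀ ℕ, (∑ i, d i) ≤ (∑ i, e i) →
    (Finset.univ.filter (fun i => e i < d i)).card ≤ N →
    ∃ l : List (Fin n), Phi l d ≤ Phi l e := by
  induction N with
  | zero =>
    intro d e _ hcard
    refine ⟨[], ?_⟩
    simp only [Phi_nil]
    rw [Finsupp.le_def]
    intro i
    by_contra hi
    have : i ∈ Finset.univ.filter (fun i => e i < d i) := by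
      simp [Finset.mem_filter]; omega
    have := Finset.card_pos.mpr ⟨i, this⟩
    omega
  | succ N ih =>
    intro d e hsum hcard
    by_cases hemp : (Finset.univ.filter (fun i => e i < d i)) = ∅
    · refine ⟨[], ?_⟩
      simp only [Phi_nil]
      rw [Finsupp.le_def]
      intro i
      by_contra hi
      have : i ∈ Finset.univ.filter (fun i => e i < d i) := by
        simp [Finset.mem_filter]; omega
      rw [hemp] at this
      exact absurd this (Finset.notMem_empty i)
    · obtain ⟨j, hj⟩ := Finset.nonempty_iff_ne_empty.mpr hemp
      have hjlt : e j < d j := (Finset.mem_filter.mp hj).2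
      have herase : (∑ i ∈ Finset.univ.erase j, d i) ≤ ∑ i ∈ Finset.univ.erase j, e i := by
        have h1 := sum_erase_add j d
        have h2 := sum_erase_add j e
        omega
      have hsum' : (∑ i, phi j d i) ≤ ∑ i, phi j e i := by
        have h1 := sum_erase_add j (phi j d)
        have h2 := sum_erase_add j (phi j e)
        rw [sum_erase_phi] at h1 h2
        rw [phi_apply_self] at h1 h2
        omega
      have hsub : (Finset.univ.filter (fun i => phi j e i < phi j d i)) ⊆
          (Finset.univ.filter (fun i => e i < d i)).erase j := by
        intro i hi
        have hi' := (Finset.mem_filter.mp hi).2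
        by_cases hij : i = j
        · subst hij
          rw [phi_apply_self, phi_apply_self] at hi'
          omega
        · rw [phi_apply_ne j d hij, phi_apply_ne j e hij] at hi'
          exact Finset.mem_erase.mpr ⟨hij, Finset.mem_filter.mpr ⟨Finset.mem_univ i, hi'⟩⟩
      have hcard' : (Finset.univ.filter (fun i => phi j e i < phi j d i)).card ≤ N := by
        have h1 := Finset.card_le_card hsub
        have h2 := Finset.card_erase_of_mem hj
        have h3 := Finset.card_pos.mpr ⟨j, hj⟩
        omega
      obtain ⟨l, hl⟩ := ih (phi j d) (phi j e) hsum' hcard'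
      exact ⟨j :: l, by rw [Phi_cons, Phi_cons]; exact hl⟩

lemma pair (d e : Fin n →₀ ℕ) :
    ∃ l : List (Fin n), Phi l d ≤ Phi l e ∨ Phi l e ≤ Phi l d := by
  rcases le_total (∑ i, d i) (∑ i, e i) with h | h
  · obtain ⟨l, hl⟩ := pair_aux _ d e h le_rfl
    exact ⟨l, Or.inl hl⟩
  · obtain ⟨l, hl⟩ := pair_aux _ e d h le_rfl
    exact ⟨l, Or.inr hl⟩

lemma chain (ps : List ((Fin n →₀ ℕ) × (Fin n →₀ ℕ))) :
    ∃ l : List (Fin n), ∀ p ∈ ps, Phi l p.1 ≤ Phi l p.2 ∨ Phi l p.2 ≤ Phi l p.1 := by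
  induction ps with
  | nil => exact ⟨[], by simp⟩
  | cons p t ih =>
    obtain ⟨l, hl⟩ := ih
    obtain ⟨l', hl'⟩ := pair (Phi l p.1) (Phi l p.2)
    refine ⟨l ++ l', ?_⟩
    intro q hq
    rw [Phi_append, Phi_append]
    rcases List.mem_cons.mp hq with rfl | hq
    · exact hl'
    · rcases hl q hq with h | h
      · exact Or.inl (Phi_mono l' h)
      · exact Or.inr (Phi_mono l' h)

lemma least (L : List (Fin n →₀ ℕ)) (hne : L ≠ [])
    (hc : ∀ x ∈ L, ∀ y ∈ L, x ≤ y ∨ y ≤ x) :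
    ∃ m ∈ L, ∀ x ∈ L, m ≤ x := by
  induction L with
  | nil => exact absurd rfl hne
  | cons x t ih =>
    rcases eq_or_ne t [] with rfl | ht
    · exact ⟨x, List.mem_cons_self, by simp⟩
    · obtain ⟨m, hm, hmin⟩ := ih ht (fun a ha b hb =>
        hc a (List.mem_cons_of_mem _ ha) b (List.mem_cons_of_mem _ hb))
      rcases hc x (List.mem_cons_self) m (List.mem_cons_of_mem _ hm) with h | h
      · refine ⟨x, List.mem_cons_self, ?_⟩
        intro y hy
        rcases List.mem_cons.mp hy with rfl | hy
        · exact le_rfl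
        · exact le_trans h (hmin y hy)
      · refine ⟨m, List.mem_cons_of_mem _ hm, ?_⟩
        intro y hy
        rcases List.mem_cons.mp hy with rfl | hy
        · exact h
        · exact hmin y hy


lemma sum_lt_of_lt {d e : Fin n →₀ ℕ} (h : d < e) : ∑ i, d i < ∑ i, e i := by
  have hle : ∀ i, d i ≤ e i := Finsupp.le_def.mp h.le
  have hne : d ≠ e := h.ne
  have hex : ∃ i, d i < e i := by
    by_contra hc
    push_neg at hc
    exact hne (Finsupp.ext fun i => le_antisymm (hle i) (hc i))
  obtain ⟨i, hi⟩ := hex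
  exact Finset.sum_lt_sum (fun i _ => hle i) ⟨i, Finset.mem_univ i, hi⟩

lemma dominated (f : MvPowerSeries (Fin n) k) :
    ∀ x : Fin n →₀ ℕ, f x ≠ 0 →
      ∃ m, (f m ≠ 0 ∧ ∀ y, f y ≠ 0 → ¬ y < m) ∧ m ≤ x := by
  have key : ∀ N : ℕ, ∀ x : Fin n →₀ ℕ, (∑ i, x i) ≤ N → f x ≠ 0 →
      ∃ m, (f m ≠ 0 ∧ ∀ y, f y ≠ 0 → ¬ y < m) ∧ m ≤ x := by
    intro N
    induction N with
    | zero =>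
      intro x hx hfx
      refine ⟨x, ⟨hfx, fun y hy hlt => ?_⟩, le_rfl⟩
      have := sum_lt_of_lt hlt
      omega
    | succ N ih =>
      intro x hx hfx
      by_cases hmin : ∀ y, f y ≠ 0 → ¬ y < x
      · exact ⟨x, ⟨hfx, hmin⟩, le_rfl⟩
      · push_neg at hmin
        obtain ⟨y, hfy, hylt⟩ := hmin
        have hsum := sum_lt_of_lt hylt
        obtain ⟨m, hm, hmy⟩ := ih y (by omega) hfy
        exact ⟨m, hm, le_trans hmy hylt.le⟩
  intro x hfx
  exact key (∑ i, x i) x le_rfl hfx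

lemma prod_X_pow (a : Fin n →₀ ℕ) :
    (∏ i : Fin n, (X i : MvPowerSeries (Fin n) k) ^ a i) = monomial a 1 := by
  classical
  have key : ∀ s : Finset (Fin n),
      (∏ i ∈ s, (X i : MvPowerSeries (Fin n) k) ^ a i)
        = monomial (∑ i ∈ s, Finsupp.single i (a i)) 1 := by
    intro s
    induction s using Finset.induction_on with
    | empty => simp [monomial_zero_one]
    | @insert j s hj ih =>
      rw [Finset.prod_insert hj, Finset.sum_insert hj, ih, X_pow_eq,
        monomial_mul_monomial, one_mul]
  rw [key Finset.univ, Finsupp.univ_sum_single]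

/-- The series `e ↦ h (e + a)`. -/
noncomputable def shiftSeries (h : MvPowerSeries (Fin n) k) (a : Fin n →₀ ℕ) : MvPowerSeries (Fin n) k :=
  fun e => h (e + a)

lemma factor (h : MvPowerSeries (Fin n) k) (a : Fin n →₀ ℕ) (ha : h a ≠ 0)
    (hmin : ∀ e, h e ≠ 0 → a ≤ e) :
    ∃ g : MvPowerSeries (Fin n) k, constantCoeff g ≠ 0 ∧
      h = (∏ i : Fin n, (X i : MvPowerSeries (Fin n) k) ^ a i) * g := by
  refine ⟨shiftSeries h a, ?_, ?_⟩
  · rw [← coeff_zero_eq_constantCoeff_apply, coeff_apply]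
    show h (0 + a) ≠ 0
    rw [zero_add]
    exact ha
  · rw [prod_X_pow]
    refine MvPowerSeries.ext fun e => ?_
    rw [coeff_monomial_mul]
    split_ifs with hle
    · rw [one_mul, coeff_apply, coeff_apply]
      show h e = h (e - a + a)
      rw [tsub_add_cancel_of_le hle]
    · rw [coeff_apply]
      by_contra hne
      exact hle (hmin e hne)

end Monomialization

/-- For every nonzero formal power series `f ∈ k⟦z₁,…,z_n⟧` there is a finite
sequence of substitutions `T_{j₁},…,T_{j_r}` (each `T_j : z_j ↦ z_j`, `z_i ↦ z_i z_j` for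
`i ≠ j`) carrying `f` to a series of the form `z₁^{a₁} ⋯ z_n^{a_n} · g` with `g` having nonzero
constant term. -/
theorem monomialization_of_mvPowerSeries
    {k : Type*} [Field k] {n : ℕ} (hn : 1 ≤ n)
    (f : MvPowerSeries (Fin n) k) (hf : f ≠ 0) :
    ∃ (l : List (Fin n)) (a : Fin n → ℕ) (g : MvPowerSeries (Fin n) k),
      MvPowerSeries.constantCoeff g ≠ 0 ∧
      l.foldl (fun h j => substMulVar j h) f
        = (∏ i : Fin n, (MvPowerSeries.X i : MvPowerSeries (Fin n) k) ^ (a i)) * g := by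
  classical
  open Monomialization in
  -- a nonzero coefficient exists
  obtain ⟨x0, hx0⟩ : ∃ x, f x ≠ 0 := by
    by_contra hc
    push_neg at hc
    exact hf (MvPowerSeries.ext fun e => by
      rw [MvPowerSeries.coeff_apply, hc, map_zero])
  -- the set of minimal exponents of f
  set M : Set (Fin n →₀ ℕ) := {x | f x ≠ 0 ∧ ∀ y, f y ≠ 0 → ¬ y < x} with hM
  have hanti : IsAntichain (· ≤ ·) M := by
    intro x hx y hy hxy hle
    exact hy.2 x hx.1 (lt_of_le_of_ne hle hxy)
  have hMfin : M.Finite := hanti.finite_of_partiallyWellOrderedOn (Set.isPWO_of_wellQuasiOrderedLE M)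
  set Mlist : List (Fin n →₀ ℕ) := hMfin.toFinset.toList with hMlist
  have hmemM : ∀ x, x ∈ Mlist ↔ x ∈ M := by
    intro x
    rw [hMlist, Finset.mem_toList, Set.Finite.mem_toFinset]
  -- make all minimal exponents comparable
  obtain ⟨l, hl⟩ := Monomialization.chain (Mlist ×ˢ Mlist)
  -- the least transformed minimal exponent
  have hMne : Mlist ≠ [] := by
    obtain ⟨m0, hm0, _⟩ := dominated f x0 hx0
    intro hnil
    have : m0 ∈ Mlist := (hmemM m0).mpr hm0
    rw [hnil] at this
    exact absurd this List.not_mem_nil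
  have hmapne : Mlist.map (Phi l) ≠ [] := by
    simpa using hMne
  have hcomp : ∀ x ∈ Mlist.map (Phi l), ∀ y ∈ Mlist.map (Phi l), x ≤ y ∨ y ≤ x := by
    intro x hx y hy
    obtain ⟨mx, hmx, rfl⟩ := List.mem_map.mp hx
    obtain ⟨my, hmy, rfl⟩ := List.mem_map.mp hy
    exact hl (mx, my) (List.mem_product.mpr ⟨hmx, hmy⟩)
  obtain ⟨A, hAmem, hAmin⟩ := least (Mlist.map (Phi l)) hmapne hcomp
  obtain ⟨m0, hm0mem, rfl⟩ := List.mem_map.mp hAmem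
  have hm0M : m0 ∈ M := (hmemM m0).mp hm0mem
  -- the transformed series
  set h : MvPowerSeries (Fin n) k := l.foldl (fun h j => substMulVar j h) f with hh
  have hhA : h (Phi l m0) ≠ 0 := by
    rw [hh, foldl_substMulVar_phi]
    exact hm0M.1
  have hhmin : ∀ e, h e ≠ 0 → Phi l m0 ≤ e := by
    intro e he
    obtain ⟨d, hd, rfl⟩ := foldl_substMulVar_ne_zero l f e he
    obtain ⟨m, hmM, hmd⟩ := dominated f d hd
    have h1 : Phi l m0 ≤ Phi l m :=
      hAmin (Phi l m) (List.mem_map.mpr ⟨m, (hmemM m).mpr hmM, rfl⟩)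
    exact le_trans h1 (Phi_mono l hmd)
  obtain ⟨g, hg1, hg2⟩ := factor h (Phi l m0) hhA hhmin
  exact ⟨l, ⇑(Phi l m0), g, hg1, hg2⟩
end

section
/- Let q be a prime with q ≡ 1 (mod 4), and consider the integral binary quadratic form Q(x,y) = x² + xy + ((1−q)/4)·y² (of discriminant q), with polar form B((x₁,y₁),(x₂,y₂)) = Q(x₁+x₂, y₁+y₂) − Q(x₁,y₁) − Q(x₂,y₂). Let κ = (κ₁,κ₂) ∈ ℚ² be a primitive dual vector, i.e. B(κ,(1,0)) ∈ ℤ and B(κ,(0,1)) ∈ ℤ but κ ∉ ℤ², and let ℓ' be a prime different from 2. Then the following are equivalent: (i) Q(κ₁,κ₂) − ℓ'/q ∈ ℤ; (ii) for every prime ℓ there exist x, y ∈ ℚ_ℓ with x − κ₁ ∈ ℤ_ℓ, y − κ₂ ∈ ℤ_ℓ, and x² + x·y + ((1−q)/4)·y² = ℓ'/q in ℚ_ℓ. -/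
open Polynomial in
/-- Quadratic Hensel lifting, phrased in `ℚ_[p]`. -/
private lemma quad_hensel {p : ℕ} [Fact p.Prime] (A B C x₀ : ℚ_[p])
    (hA : ‖A‖ ≤ 1) (hB : ‖B‖ ≤ 1) (hC : ‖C‖ ≤ 1) (hx₀ : ‖x₀‖ ≤ 1)
    (heval : ‖A * x₀ ^ 2 + B * x₀ + C‖ < 1)
    (hderiv : ‖2 * A * x₀ + B‖ = 1) :
    ∃ x : ℚ_[p], ‖x‖ ≤ 1 ∧ A * x ^ 2 + B * x + C = 0 := by
  set a : ℤ_[p] := ⟨A, hA⟩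
  set b : ℤ_[p] := ⟨B, hB⟩
  set c : ℤ_[p] := ⟨C, hC⟩
  set z₀ : ℤ_[p] := ⟨x₀, hx₀⟩
  set F : Polynomial ℤ_[p] := Polynomial.C a * X ^ 2 + Polynomial.C b * X + Polynomial.C c with hF
  have hFd : F.derivative = Polynomial.C (2 * a) * X + Polynomial.C b := by
    simp [hF, Polynomial.C_mul, Polynomial.C_ofNat]; ring
  have hev : ∀ z : ℤ_[p], F.eval z = a * z ^ 2 + b * z + c := by
    intro z; simp [hF]
  have hevd : F.derivative.eval z₀ = 2 * a * z₀ + b := by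
    rw [hFd]; simp
  have hcoe : ∀ z : ℤ_[p], ((a * z ^ 2 + b * z + c : ℤ_[p]) : ℚ_[p])
      = A * (z : ℚ_[p]) ^ 2 + B * (z : ℚ_[p]) + C := by
    intro z; rw [PadicInt.coe_add, PadicInt.coe_add, PadicInt.coe_mul, PadicInt.coe_mul, PadicInt.coe_pow]
  have hnorm : ‖F.eval z₀‖ < ‖F.derivative.eval z₀‖ ^ 2 := by
    rw [hev, hevd]
    have h1 : ‖(a * z₀ ^ 2 + b * z₀ + c : ℤ_[p])‖ = ‖A * x₀ ^ 2 + B * x₀ + C‖ := by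
      rw [PadicInt.norm_def, hcoe]
    have h2 : ‖(2 * a * z₀ + b : ℤ_[p])‖ = 1 := by
      have two : ((2 : ℤ_[p]) : ℚ_[p]) = 2 := by norm_cast
      have h3 : ((2 * a * z₀ + b : ℤ_[p]) : ℚ_[p]) = 2 * A * x₀ + B := by
        rw [PadicInt.coe_add, PadicInt.coe_mul, PadicInt.coe_mul, two]
      rw [PadicInt.norm_def, h3, hderiv]
    rw [h1, h2]; simpa using heval
  obtain ⟨z, hz, -⟩ := hensels_lemma hnorm
  refine ⟨(z : ℚ_[p]), z.2, ?_⟩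
  rw [← hcoe, ← hev, ← Polynomial.coe_aeval_eq_eval, hz, PadicInt.coe_zero]

private lemma padd {p : ℕ} [Fact p.Prime] {a b : ℚ_[p]} (ha : ‖a‖ ≤ 1) (hb : ‖b‖ ≤ 1) :
    ‖a + b‖ ≤ 1 :=
  le_trans (Padic.nonarchimedean a b) (max_le ha hb)

private lemma pmul {p : ℕ} [Fact p.Prime] {a b : ℚ_[p]} (ha : ‖a‖ ≤ 1) (hb : ‖b‖ ≤ 1) :
    ‖a * b‖ ≤ 1 := by
  rw [norm_mul]; exact mul_le_one₀ ha (norm_nonneg _) hb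

private lemma psub {p : ℕ} [Fact p.Prime] {a b : ℚ_[p]} (ha : ‖a‖ ≤ 1) (hb : ‖b‖ ≤ 1) :
    ‖a - b‖ ≤ 1 := by
  rw [sub_eq_add_neg]; exact padd ha (by rwa [norm_neg])

private lemma pint {p : ℕ} [Fact p.Prime] (n : ℤ) : ‖((n : ℤ) : ℚ_[p])‖ ≤ 1 :=
  Padic.norm_int_le_one n

private lemma pint_one {p : ℕ} [Fact p.Prime] {n : ℤ} (h : ¬ (p : ℤ) ∣ n) :
    ‖((n : ℤ) : ℚ_[p])‖ = 1 := by
  refine le_antisymm (pint n) (not_lt.mp fun hlt => h ?_)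
  exact Padic.norm_intCast_lt_one_iff.mp hlt

private lemma pint_lt {p : ℕ} [Fact p.Prime] {n : ℤ} (h : (p : ℤ) ∣ n) :
    ‖((n : ℤ) : ℚ_[p])‖ < 1 :=
  Padic.norm_intCast_lt_one_iff.mpr h

set_option maxHeartbeats 2000000 in
/-- Let `q ≡ 1 (mod 4)` be a prime, `Q(x,y) = x² + xy + ((1-q)/4)y²` the
principal binary form of discriminant `q` (so `c = (1-q)/4 ∈ ℤ`), with polar form `B`.
Let `κ = (κ₁,κ₂)` be a primitive dual vector (`B(κ,e) ∈ ℤ` for the standard basis vectors `e`,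
but `κ ∉ ℤ²`) and `ℓ'` a prime different from `2`.  Then `Q(κ₁,κ₂) ≡ ℓ'/q (mod ℤ)` iff the
coset `κ + ℤ̂²` represents `ℓ'/q` everywhere locally, i.e. for every prime `ℓ` there are
`x, y ∈ ℚ_ℓ` congruent to `κ₁, κ₂` modulo `ℤ_ℓ` with `x² + xy + ((1-q)/4)y² = ℓ'/q`. -/
theorem primitive_coset_represents_iff_congruence
    (q : ℕ) (hq : q.Prime) (hq4 : q % 4 = 1)
    (c : ℤ) (hc : (4 : ℤ) * c = 1 - (q : ℤ))
    (Qf : ℚ → ℚ → ℚ) (hQf : ∀ x y : ℚ, Qf x y = x ^ 2 + x * y + (c : ℚ) * y ^ 2)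
    (Bf : ℚ → ℚ → ℚ → ℚ → ℚ)
    (hBf : ∀ x₁ y₁ x₂ y₂ : ℚ,
      Bf x₁ y₁ x₂ y₂ = Qf (x₁ + x₂) (y₁ + y₂) - Qf x₁ y₁ - Qf x₂ y₂)
    (κ₁ κ₂ : ℚ)
    (hdual₁ : ∃ z : ℤ, Bf κ₁ κ₂ 1 0 = (z : ℚ))
    (hdual₂ : ∃ z : ℤ, Bf κ₁ κ₂ 0 1 = (z : ℚ))
    (hprim : ¬ ∃ z₁ z₂ : ℤ, κ₁ = (z₁ : ℚ) ∧ κ₂ = (z₂ : ℚ))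
    (ℓ' : ℕ) (hℓ' : ℓ'.Prime) (hℓ'2 : ℓ' ≠ 2) :
    (∃ z : ℤ, Qf κ₁ κ₂ - (ℓ' : ℚ) / (q : ℚ) = (z : ℚ)) ↔
      (∀ (ℓ : ℕ) [Fact ℓ.Prime], ∃ x y : ℚ_[ℓ],
        ‖x - (κ₁ : ℚ_[ℓ])‖ ≤ 1 ∧ ‖y - (κ₂ : ℚ_[ℓ])‖ ≤ 1 ∧
        x ^ 2 + x * y + (c : ℚ_[ℓ]) * y ^ 2 = (ℓ' : ℚ_[ℓ]) / (q : ℚ_[ℓ])) := by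
  haveI hqF : Fact q.Prime := ⟨hq⟩
  haveI hℓ'F : Fact ℓ'.Prime := ⟨hℓ'⟩
  have hq2 : q ≠ 2 := by omega
  have hq0 : (q : ℚ) ≠ 0 := Nat.cast_ne_zero.mpr hq.ne_zero
  have h4 : (4 : ℚ) * (c : ℚ) = 1 - (q : ℚ) := by exact_mod_cast congrArg (Int.cast : ℤ → ℚ) hc
  -- the dual integers
  obtain ⟨b₁, hb₁⟩ := hdual₁
  obtain ⟨b₂, hb₂⟩ := hdual₂
  rw [hBf, hQf, hQf, hQf] at hb₁ hb₂
  have hb₁' : 2 * κ₁ + κ₂ = (b₁ : ℚ) := by linear_combination hb₁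
  have hb₂' : κ₁ + 2 * (c : ℚ) * κ₂ = (b₂ : ℚ) := by linear_combination hb₂
  clear hb₁ hb₂
  -- numerators
  obtain ⟨A₁, hA₁def⟩ : ∃ A₁ : ℤ, A₁ = b₂ - 2 * c * b₁ := ⟨_, rfl⟩
  obtain ⟨A₂, hA₂def⟩ : ∃ A₂ : ℤ, A₂ = (q : ℤ) * b₁ - 2 * A₁ := ⟨_, rfl⟩
  have hA₁defQ : (A₁ : ℚ) = (b₂ : ℚ) - 2 * c * b₁ := by exact_mod_cast congrArg (Int.cast : ℤ → ℚ) hA₁def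
  have hA₂defQ : (A₂ : ℚ) = (q : ℚ) * b₁ - 2 * A₁ := by exact_mod_cast congrArg (Int.cast : ℤ → ℚ) hA₂def
  have hA₁ : (q : ℚ) * κ₁ = (A₁ : ℚ) := by
    linear_combination (-2*(c:ℚ)) * hb₁' + hb₂' + κ₁ * h4 - hA₁defQ
  have hA₂ : (q : ℚ) * κ₂ = (A₂ : ℚ) := by
    linear_combination (q:ℚ) * hb₁' - 2 * hA₁ - hA₂defQ
  have hqA₁ : ¬ (q : ℤ) ∣ A₁ := by
    rintro ⟨m, hm⟩
    have hκ₁ : κ₁ = (m : ℚ) := by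
      refine mul_left_cancel₀ hq0 ?_
      rw [hA₁, hm]; push_cast; ring
    refine hprim ⟨m, b₁ - 2 * m, hκ₁, ?_⟩
    push_cast
    linear_combination hb₁' - 2 * hκ₁
  have hqA₂ : ¬ (q : ℤ) ∣ A₂ := by
    intro hdvd
    have h2A₁ : (q : ℤ) ∣ 2 * A₁ := by
      have h : (2 : ℤ) * A₁ = q * b₁ - A₂ := by rw [hA₂def]; ring
      rw [h]; exact dvd_sub ⟨b₁, rfl⟩ hdvd
    rcases (Int.Prime.dvd_mul' (by exact_mod_cast hq) h2A₁) with h | h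
    · have h2 : (q : ℕ) ∣ 2 := by exact_mod_cast h
      exact hq2 ((Nat.prime_dvd_prime_iff_eq hq Nat.prime_two).mp h2)
    · exact hqA₁ h
  have hbb : b₁ - 2 * b₂ = A₂ := by
    have hbbQ : (b₁ : ℚ) - 2 * b₂ = (A₂ : ℚ) := by
      linear_combination -hb₁' + 2 * hb₂' + hA₂ - κ₂ * h4
    exact_mod_cast hbbQ
  constructor
  · -- forward direction
    rintro ⟨z, hz⟩
    have hzQ : κ₁ ^ 2 + κ₁ * κ₂ + (c : ℚ) * κ₂ ^ 2 - (ℓ' : ℚ) / (q : ℚ) = (z : ℚ) := by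
      rw [← hQf]; exact hz
    have hL : (ℓ' : ℚ) = q * (κ₁ ^ 2 + κ₁ * κ₂ + c * κ₂ ^ 2) - q * z := by
      have h0 : (ℓ' : ℚ) / q = κ₁ ^ 2 + κ₁ * κ₂ + c * κ₂ ^ 2 - z := by
        linear_combination -hzQ
      rw [div_eq_iff hq0] at h0
      linear_combination h0
    have hNQ : (A₁ : ℚ) ^ 2 + A₁ * A₂ + c * A₂ ^ 2 = q * ℓ' + q ^ 2 * z := by
      linear_combination (-(q : ℚ)) * hL + (-((q : ℚ) * κ₁ + A₁) - (q : ℚ) * κ₂) * hA₁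
        + (-(A₁ : ℚ) - (c : ℚ) * ((q : ℚ) * κ₂ + (A₂ : ℚ))) * hA₂
    have hN : A₁ ^ 2 + A₁ * A₂ + c * A₂ ^ 2 = (q : ℤ) * ℓ' + (q : ℤ) ^ 2 * z := by
      exact_mod_cast hNQ
    have hq0' : (q : ℤ) ≠ 0 := by exact_mod_cast hq.ne_zero
    have hLint : (ℓ' : ℤ) = -A₁ ^ 2 + (q : ℤ) * (A₁ * b₁ + c * b₁ ^ 2 - z) := by
      refine mul_left_cancel₀ hq0' ?_
      linear_combination -hN + (A₁ ^ 2 - (q:ℤ) * A₁ * b₁) * hc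
        + (A₁ + c * A₂ + c * ((q : ℤ) * b₁ - 2 * A₁)) * hA₂def
    have hLmod : ((ℓ' : ℕ) : ZMod q) = -((A₁ : ZMod q)) ^ 2 := by
      have h0 := congrArg (fun n : ℤ => (n : ZMod q)) hLint
      push_cast at h0
      simpa [ZMod.natCast_self] using h0
    have hA₁z : ((A₁ : ZMod q)) ≠ 0 := fun h0 =>
      hqA₁ ((ZMod.intCast_zmod_eq_zero_iff_dvd A₁ q).mp h0)
    have hA₂z : ((A₂ : ZMod q)) ≠ 0 := fun h0 =>
      hqA₂ ((ZMod.intCast_zmod_eq_zero_iff_dvd A₂ q).mp h0)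
    have hℓ'q : ℓ' ≠ q := by
      intro e
      rw [e] at hLmod
      rw [ZMod.natCast_self] at hLmod
      have : ((A₁ : ZMod q)) ^ 2 = 0 := by linear_combination hLmod
      exact hA₁z (pow_eq_zero_iff (n := 2) (by norm_num) |>.mp this)
    have hsqℓ' : IsSquare ((ℓ' : ℕ) : ZMod q) := by
      obtain ⟨i, hi⟩ := (ZMod.exists_sq_eq_neg_one_iff (p := q)).mpr (by omega)
      exact ⟨i * A₁, by rw [hLmod]; linear_combination ((A₁ : ZMod q)^2) * hi⟩
    have hsqq : IsSquare ((q : ℕ) : ZMod ℓ') :=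
      (ZMod.exists_sq_eq_prime_iff_of_mod_four_eq_one hq4 hℓ'2).mp hsqℓ'
    intro ℓ instℓ
    by_cases hℓq : ℓ = q
    · -- local solvability at q
      subst hℓq
      -- Fact instance is available
      obtain ⟨s₀, hs₀⟩ := ZMod.intCast_surjective (-(z : ZMod ℓ) * (A₂ : ZMod ℓ)⁻¹)
      have hs : (ℓ : ℤ) ∣ A₂ * s₀ + z := by
        rw [← ZMod.intCast_zmod_eq_zero_iff_dvd]
        push_cast
        rw [hs₀]
        field_simp
        ring
      obtain ⟨t₀, ht₀⟩ : ∃ t₀ : ℤ, t₀ = -2 * s₀ := ⟨_, rfl⟩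
      have hE : (ℓ : ℤ) ∣ s₀ ^ 2 + s₀ * t₀ + c * t₀ ^ 2 + b₁ * s₀ + b₂ * t₀ + z := by
        have he : s₀ ^ 2 + s₀ * t₀ + c * t₀ ^ 2 + b₁ * s₀ + b₂ * t₀ + z
            = -(ℓ : ℤ) * s₀ ^ 2 + (A₂ * s₀ + z) := by
          rw [ht₀]
          linear_combination s₀ ^ 2 * hc + s₀ * hbb
        rw [he]
        exact dvd_add ⟨-s₀ ^ 2, by ring⟩ hs
      have hk1 : 2 * (κ₁ : ℚ_[ℓ]) + (κ₂ : ℚ_[ℓ]) = ((b₁ : ℤ) : ℚ_[ℓ]) := by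
        have h0 := congrArg (fun t : ℚ => (t : ℚ_[ℓ])) hb₁'
        push_cast at h0 ⊢; exact h0
      have hk2 : (κ₁ : ℚ_[ℓ]) + 2 * ((c : ℤ) : ℚ_[ℓ]) * (κ₂ : ℚ_[ℓ]) = ((b₂ : ℤ) : ℚ_[ℓ]) := by
        have h0 := congrArg (fun t : ℚ => (t : ℚ_[ℓ])) hb₂'
        push_cast at h0 ⊢; exact h0
      have hkz : (κ₁ : ℚ_[ℓ]) ^ 2 + (κ₁ : ℚ_[ℓ]) * (κ₂ : ℚ_[ℓ])
          + ((c : ℤ) : ℚ_[ℓ]) * (κ₂ : ℚ_[ℓ]) ^ 2 - (ℓ' : ℚ_[ℓ]) / (ℓ : ℚ_[ℓ])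
          = ((z : ℤ) : ℚ_[ℓ]) := by
        have h0 := congrArg (fun t : ℚ => (t : ℚ_[ℓ])) hzQ
        push_cast at h0 ⊢; exact h0
      by_cases hqb₁ : (ℓ : ℤ) ∣ b₁
      · -- then q ∤ b₂, Hensel in the second variable
        have hqb₂ : ¬ (ℓ : ℤ) ∣ b₂ := by
          intro hd
          exact hqA₂ (hbb ▸ dvd_sub hqb₁ (Dvd.dvd.mul_left hd 2))
        have hD : ¬ (ℓ : ℤ) ∣ (ℓ : ℤ) * s₀ + b₂ := by
          intro hd
          exact hqb₂ ((Int.dvd_add_right ⟨s₀, rfl⟩).mp hd)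
        obtain ⟨t, htn, hroot⟩ := quad_hensel ((c : ℤ) : ℚ_[ℓ])
          (((s₀ : ℤ) : ℚ_[ℓ]) + ((b₂ : ℤ) : ℚ_[ℓ]))
          (((s₀ : ℤ) : ℚ_[ℓ]) ^ 2 + ((b₁ : ℤ) : ℚ_[ℓ]) * ((s₀ : ℤ) : ℚ_[ℓ]) + ((z : ℤ) : ℚ_[ℓ]))
          ((t₀ : ℤ) : ℚ_[ℓ])
          (pint c) (padd (pint s₀) (pint b₂))
          (padd (padd (by rw [norm_pow]; exact pow_le_one₀ (norm_nonneg _) (pint s₀)) (pmul (pint b₁) (pint s₀))) (pint z))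
          (pint t₀)
          (by
            have he : ((c : ℤ) : ℚ_[ℓ]) * ((t₀ : ℤ) : ℚ_[ℓ]) ^ 2
                + (((s₀ : ℤ) : ℚ_[ℓ]) + ((b₂ : ℤ) : ℚ_[ℓ])) * ((t₀ : ℤ) : ℚ_[ℓ])
                + (((s₀ : ℤ) : ℚ_[ℓ]) ^ 2 + ((b₁ : ℤ) : ℚ_[ℓ]) * ((s₀ : ℤ) : ℚ_[ℓ]) + ((z : ℤ) : ℚ_[ℓ]))
                = (((s₀ ^ 2 + s₀ * t₀ + c * t₀ ^ 2 + b₁ * s₀ + b₂ * t₀ + z : ℤ)) : ℚ_[ℓ]) := by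
              push_cast; ring
            rw [he]
            exact pint_lt hE)
          (by
            have he : 2 * ((c : ℤ) : ℚ_[ℓ]) * ((t₀ : ℤ) : ℚ_[ℓ])
                + (((s₀ : ℤ) : ℚ_[ℓ]) + ((b₂ : ℤ) : ℚ_[ℓ]))
                = (((1 - 4 * c) * s₀ + b₂ : ℤ) : ℚ_[ℓ]) := by
              rw [ht₀]; push_cast; ring
            rw [he]
            have he2 : ((1 : ℤ) - 4 * c) * s₀ + b₂ = (ℓ : ℤ) * s₀ + b₂ := by
              linear_combination -s₀ * hc
            rw [he2]
            exact pint_one hD)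
        refine ⟨(κ₁ : ℚ_[ℓ]) + ((s₀ : ℤ) : ℚ_[ℓ]), (κ₂ : ℚ_[ℓ]) + t, ?_, ?_, ?_⟩
        · rw [add_sub_cancel_left]; exact pint s₀
        · rw [add_sub_cancel_left]; exact htn
        · linear_combination hkz + ((s₀ : ℤ) : ℚ_[ℓ]) * hk1 + t * hk2 + hroot
      · -- q ∤ b₁, Hensel in the first variable
        obtain ⟨s, hsn, hroot⟩ := quad_hensel (1 : ℚ_[ℓ])
          (((t₀ : ℤ) : ℚ_[ℓ]) + ((b₁ : ℤ) : ℚ_[ℓ]))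
          (((c : ℤ) : ℚ_[ℓ]) * ((t₀ : ℤ) : ℚ_[ℓ]) ^ 2 + ((b₂ : ℤ) : ℚ_[ℓ]) * ((t₀ : ℤ) : ℚ_[ℓ]) + ((z : ℤ) : ℚ_[ℓ]))
          ((s₀ : ℤ) : ℚ_[ℓ])
          norm_one.le (padd (pint t₀) (pint b₁))
          (padd (padd (pmul (pint c) (by rw [norm_pow]; exact pow_le_one₀ (norm_nonneg _) (pint t₀))) (pmul (pint b₂) (pint t₀))) (pint z))
          (pint s₀)
          (by
            have he : (1 : ℚ_[ℓ]) * ((s₀ : ℤ) : ℚ_[ℓ]) ^ 2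
                + ((((t₀ : ℤ) : ℚ_[ℓ])) + ((b₁ : ℤ) : ℚ_[ℓ])) * ((s₀ : ℤ) : ℚ_[ℓ])
                + (((c : ℤ) : ℚ_[ℓ]) * ((t₀ : ℤ) : ℚ_[ℓ]) ^ 2 + ((b₂ : ℤ) : ℚ_[ℓ]) * ((t₀ : ℤ) : ℚ_[ℓ]) + ((z : ℤ) : ℚ_[ℓ]))
                = (((s₀ ^ 2 + s₀ * t₀ + c * t₀ ^ 2 + b₁ * s₀ + b₂ * t₀ + z : ℤ)) : ℚ_[ℓ]) := by
              push_cast; ring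
            rw [he]
            exact pint_lt hE)
          (by
            have he : 2 * (1 : ℚ_[ℓ]) * ((s₀ : ℤ) : ℚ_[ℓ])
                + (((t₀ : ℤ) : ℚ_[ℓ]) + ((b₁ : ℤ) : ℚ_[ℓ]))
                = ((b₁ : ℤ) : ℚ_[ℓ]) := by
              rw [ht₀]; push_cast; ring
            rw [he]
            exact pint_one hqb₁)
        refine ⟨(κ₁ : ℚ_[ℓ]) + s, (κ₂ : ℚ_[ℓ]) + ((t₀ : ℤ) : ℚ_[ℓ]), ?_, ?_, ?_⟩
        · rw [add_sub_cancel_left]; exact hsn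
        · rw [add_sub_cancel_left]; exact pint t₀
        · linear_combination hkz + s * hk1 + ((t₀ : ℤ) : ℚ_[ℓ]) * hk2 + hroot
    · -- ℓ ≠ q
      have hℓp : ℓ.Prime := instℓ.out
      have hℓdq : ¬ (ℓ : ℤ) ∣ (q : ℤ) := by
        intro hd
        have : ℓ ∣ q := by exact_mod_cast hd
        exact hℓq ((Nat.prime_dvd_prime_iff_eq hℓp hq).mp this)
      have hqunit : ‖((q : ℤ) : ℚ_[ℓ])‖ = 1 := pint_one hℓdq
      have hqcast : ((q : ℕ) : ℚ_[ℓ]) = ((q : ℤ) : ℚ_[ℓ]) := by push_cast; ring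
      have hℓ'cast : ((ℓ' : ℕ) : ℚ_[ℓ]) = ((ℓ' : ℤ) : ℚ_[ℓ]) := by push_cast; ring
      have hqne : ((q : ℕ) : ℚ_[ℓ]) ≠ 0 := by
        rw [hqcast]
        intro h0
        rw [h0, norm_zero] at hqunit
        norm_num at hqunit
      have hκ₁n : ‖(κ₁ : ℚ_[ℓ])‖ ≤ 1 := by
        have hcast : ((q : ℤ) : ℚ_[ℓ]) * (κ₁ : ℚ_[ℓ]) = ((A₁ : ℤ) : ℚ_[ℓ]) := by
          have h0 := congrArg (fun t : ℚ => (t : ℚ_[ℓ])) hA₁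
          push_cast at h0 ⊢; exact h0
        have := congrArg (fun t : ℚ_[ℓ] => ‖t‖) hcast
        simp only [norm_mul, hqunit, one_mul] at this
        rw [this]; exact pint A₁
      have hκ₂n : ‖(κ₂ : ℚ_[ℓ])‖ ≤ 1 := by
        have hcast : ((q : ℤ) : ℚ_[ℓ]) * (κ₂ : ℚ_[ℓ]) = ((A₂ : ℤ) : ℚ_[ℓ]) := by
          have h0 := congrArg (fun t : ℚ => (t : ℚ_[ℓ])) hA₂
          push_cast at h0 ⊢; exact h0
        have := congrArg (fun t : ℚ_[ℓ] => ‖t‖) hcast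
        simp only [norm_mul, hqunit, one_mul] at this
        rw [this]; exact pint A₂
      have htnorm : ‖(ℓ' : ℚ_[ℓ]) / (q : ℚ_[ℓ])‖ ≤ 1 := by
        rw [norm_div, hqcast, hℓ'cast, hqunit, div_one]
        exact pint ℓ'
      by_cases hℓ2 : ℓ = 2
      · -- the prime 2
        subst hℓ2
        have hqodd : q % 2 = 1 := by omega
        have hℓ'odd : ℓ' % 2 = 1 := by
          rcases hℓ'.eq_two_or_odd with e | e
          · exact absurd e hℓ'2
          · exact e
        have hCdvd : (2 : ℤ) ∣ ((q : ℤ) - (ℓ' : ℤ)) := by omega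
        have hCval : (1 : ℚ_[2]) - (ℓ' : ℚ_[2]) / (q : ℚ_[2])
            = (((q : ℤ) - (ℓ' : ℤ) : ℤ) : ℚ_[2]) / ((q : ℕ) : ℚ_[2]) := by
          rw [eq_div_iff hqne]
          push_cast
          field_simp
        have hClt : ‖(1 : ℚ_[2]) - (ℓ' : ℚ_[2]) / (q : ℚ_[2])‖ < 1 := by
          rw [hCval, norm_div, hqcast, hqunit, div_one]
          exact pint_lt hCdvd
        obtain ⟨y, hyn, hroot⟩ := quad_hensel ((c : ℤ) : ℚ_[2]) (1 : ℚ_[2])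
          ((1 : ℚ_[2]) - (ℓ' : ℚ_[2]) / (q : ℚ_[2])) (0 : ℚ_[2])
          (pint c) norm_one.le hClt.le (by rw [norm_zero]; norm_num)
          (by simpa using hClt)
          (by norm_num)
        refine ⟨1, y, psub norm_one.le hκ₁n, psub hyn hκ₂n, ?_⟩
        linear_combination hroot
      · by_cases hℓℓ' : ℓ = ℓ'
        · -- the prime ℓ'
          subst hℓℓ'
          have hℓd2 : ¬ (ℓ : ℤ) ∣ 2 := by
            intro hd
            have : ℓ ∣ 2 := by exact_mod_cast hd
            exact hℓ2 ((Nat.prime_dvd_prime_iff_eq hℓp Nat.prime_two).mp this)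
          obtain ⟨u, hu⟩ := hsqq
          obtain ⟨r₀, hr₀⟩ := ZMod.intCast_surjective (n := ℓ) u
          have hqz : ((q : ℕ) : ZMod ℓ) ≠ 0 := by
            rw [Ne, ZMod.natCast_eq_zero_iff]
            intro hd
            exact hℓq ((Nat.prime_dvd_prime_iff_eq hℓp hq).mp hd)
          have hu0 : u ≠ 0 := by
            intro h0
            rw [h0, mul_zero] at hu
            exact hqz hu
          have hr₀nd : ¬ (ℓ : ℤ) ∣ r₀ := by
            intro hd
            rw [← ZMod.intCast_zmod_eq_zero_iff_dvd, hr₀] at hd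
            exact hu0 hd
          have hdvd : (ℓ : ℤ) ∣ r₀ ^ 2 - (q : ℤ) := by
            rw [← ZMod.intCast_zmod_eq_zero_iff_dvd]
            push_cast
            rw [hr₀]
            linear_combination -hu
          have h2r₀ : ¬ (ℓ : ℤ) ∣ 2 * r₀ := by
            intro hd
            rcases (Int.Prime.dvd_mul' (by exact_mod_cast hℓp) hd) with h | h
            · exact hℓd2 h
            · exact hr₀nd h
          obtain ⟨r, hrn, hroot⟩ := quad_hensel (1 : ℚ_[ℓ]) (0 : ℚ_[ℓ])
            (-((q : ℤ) : ℚ_[ℓ])) ((r₀ : ℤ) : ℚ_[ℓ])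
            norm_one.le (by rw [norm_zero]; norm_num) (by rw [norm_neg]; exact pint q) (pint r₀)
            (by
              have he : (1 : ℚ_[ℓ]) * ((r₀ : ℤ) : ℚ_[ℓ]) ^ 2 + 0 * ((r₀ : ℤ) : ℚ_[ℓ])
                  + -((q : ℤ) : ℚ_[ℓ]) = ((r₀ ^ 2 - (q : ℤ) : ℤ) : ℚ_[ℓ]) := by
                push_cast; ring
              rw [he]
              exact pint_lt hdvd)
            (by
              have he : 2 * (1 : ℚ_[ℓ]) * ((r₀ : ℤ) : ℚ_[ℓ]) + 0 = ((2 * r₀ : ℤ) : ℚ_[ℓ]) := by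
                push_cast; ring
              rw [he]
              exact pint_one h2r₀)
          have hr2 : r ^ 2 = ((q : ℤ) : ℚ_[ℓ]) := by linear_combination hroot
          have hrne : r ≠ 0 := by
            intro h0
            rw [h0] at hr2
            have : ((q : ℤ) : ℚ_[ℓ]) = 0 := by rw [← hr2]; ring
            rw [this, norm_zero] at hqunit
            norm_num at hqunit
          have hrnorm : ‖r‖ = 1 := by
            have h1 : ‖r‖ ^ 2 = 1 := by rw [← norm_pow, hr2, hqunit]
            have h2 : (‖r‖ - 1) * (‖r‖ + 1) = 0 := by ring_nf; linear_combination h1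
            rcases mul_eq_zero.mp h2 with h | h
            · linarith
            · nlinarith [norm_nonneg r]
          have h2unit : ‖(2 : ℚ_[ℓ])‖ = 1 := by
            have : ((2 : ℤ) : ℚ_[ℓ]) = (2 : ℚ_[ℓ]) := by push_cast; ring
            rw [← this]
            exact pint_one hℓd2
          have h2ne : (2 : ℚ_[ℓ]) ≠ 0 := by
            intro h0
            rw [h0, norm_zero] at h2unit
            norm_num at h2unit
          obtain ⟨y, hy⟩ : ∃ y : ℚ_[ℓ], y = (1 / ((q : ℕ) : ℚ_[ℓ]) - ((ℓ : ℕ) : ℚ_[ℓ])) / r :=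
            ⟨_, rfl⟩
          obtain ⟨x, hx⟩ : ∃ x : ℚ_[ℓ], x = ((ℓ : ℕ) : ℚ_[ℓ]) + ((-1 + r) / 2) * y := ⟨_, rfl⟩
          have hyn : ‖y‖ ≤ 1 := by
            have hQne : ((q : ℤ) : ℚ_[ℓ]) ≠ 0 := hqcast ▸ hqne
            have hye : y = ((1 - (ℓ : ℤ) * (q : ℤ) : ℤ) : ℚ_[ℓ]) / (((q : ℤ) : ℚ_[ℓ]) * r) := by
              rw [hy, hqcast]
              rw [div_eq_div_iff hrne (mul_ne_zero hQne hrne)]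
              push_cast
              field_simp
            rw [hye, norm_div, norm_mul, hqunit, hrnorm, one_mul, div_one]
            exact pint _
          have hxn : ‖x‖ ≤ 1 := by
            rw [hx]
            refine padd (hℓ'cast ▸ pint ℓ) (pmul ?_ hyn)
            rw [norm_div, h2unit, div_one]
            exact padd (by rw [norm_neg, norm_one]) hrnorm.le
          refine ⟨x, y, psub hxn hκ₁n, psub hyn hκ₂n, ?_⟩
          have h4p : (4 : ℚ_[ℓ]) * ((c : ℤ) : ℚ_[ℓ]) = 1 - ((q : ℤ) : ℚ_[ℓ]) := by
            have h0 := congrArg (fun t : ℚ => (t : ℚ_[ℓ])) h4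
            push_cast at h0 ⊢; exact h0
          have hyr : r * y = 1 / ((q : ℕ) : ℚ_[ℓ]) - ((ℓ : ℕ) : ℚ_[ℓ]) := by
            rw [hy, mul_comm, div_mul_cancel₀ _ hrne]
          have e1 : x - (-1 + r) / 2 * y = ((ℓ : ℕ) : ℚ_[ℓ]) := by rw [hx]; ring
          have e2 : x - (-1 - r) / 2 * y = 1 / ((q : ℕ) : ℚ_[ℓ]) := by
            rw [hx]; linear_combination hyr
          have key : (x - (-1 + r) / 2 * y) * (x - (-1 - r) / 2 * y)
              = ((ℓ : ℕ) : ℚ_[ℓ]) / ((q : ℕ) : ℚ_[ℓ]) := by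
            rw [e1, e2]; ring
          linear_combination key + (y ^ 2 / 4) * h4p + (y ^ 2 / 4) * hr2
        · -- generic prime ℓ ∤ 2qℓ'
          have hℓd2 : ¬ (ℓ : ℤ) ∣ 2 := by
            intro hd
            have : ℓ ∣ 2 := by exact_mod_cast hd
            exact hℓ2 ((Nat.prime_dvd_prime_iff_eq hℓp Nat.prime_two).mp this)
          have hqzm : ((q : ℕ) : ZMod ℓ) ≠ 0 := by
            rw [Ne, ZMod.natCast_eq_zero_iff]
            intro hd
            exact hℓq ((Nat.prime_dvd_prime_iff_eq hℓp hq).mp hd)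
          have hℓ'zm : ((ℓ' : ℕ) : ZMod ℓ) ≠ 0 := by
            rw [Ne, ZMod.natCast_eq_zero_iff]
            intro hd
            exact hℓℓ' ((Nat.prime_dvd_prime_iff_eq hℓp hℓ').mp hd)
          obtain ⟨w, hw⟩ : ∃ w : ZMod ℓ, w = ((ℓ' : ℕ) : ZMod ℓ) * ((q : ℕ) : ZMod ℓ)⁻¹ :=
            ⟨_, rfl⟩
          have hw0 : w ≠ 0 := by rw [hw]; exact mul_ne_zero hℓ'zm (inv_ne_zero hqzm)
          have hcard : Fintype.card (ZMod ℓ) % 2 = 1 := by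
            rw [ZMod.card]
            rcases hℓp.eq_two_or_odd with e | e
            · exact absurd e hℓ2
            · exact e
          obtain ⟨a, b, hab⟩ := FiniteField.exists_root_sum_quadratic
            (f := Polynomial.X ^ 2 - Polynomial.C (4 * w))
            (g := Polynomial.C (-((q : ℕ) : ZMod ℓ)) * Polynomial.X ^ 2)
            (Polynomial.degree_X_pow_sub_C (by norm_num) _)
            (by
              rw [Polynomial.degree_C_mul_X_pow _ (neg_ne_zero.mpr hqzm)]
              rfl)
            hcard
          simp only [Polynomial.eval_add, Polynomial.eval_sub, Polynomial.eval_pow,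
            Polynomial.eval_mul, Polynomial.eval_C, Polynomial.eval_X] at hab
          have hab' : a ^ 2 - ((q : ℕ) : ZMod ℓ) * b ^ 2 = 4 * w := by linear_combination hab
          have h2zm : (2 : ZMod ℓ) ≠ 0 := by
            have h0 : ((2 : ℕ) : ZMod ℓ) ≠ 0 := by
              rw [Ne, ZMod.natCast_eq_zero_iff]
              intro hd
              exact hℓ2 ((Nat.prime_dvd_prime_iff_eq hℓp Nat.prime_two).mp hd)
            simpa using h0
          obtain ⟨X, hX⟩ : ∃ t : ZMod ℓ, t = (a - b) * (2 : ZMod ℓ)⁻¹ := ⟨_, rfl⟩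
          have h2X : (2 : ZMod ℓ) * X = a - b := by
            rw [hX, mul_comm, mul_assoc, inv_mul_cancel₀ h2zm, mul_one]
          have hczm : (4 : ZMod ℓ) * ((c : ℤ) : ZMod ℓ) = 1 - ((q : ℕ) : ZMod ℓ) := by
            have h0 := congrArg (fun n : ℤ => (n : ZMod ℓ)) hc
            push_cast at h0 ⊢
            exact h0
          have hval : X ^ 2 + X * b + ((c : ℤ) : ZMod ℓ) * b ^ 2 = w := by
            have h4zm : (4 : ZMod ℓ) ≠ 0 := by
              have he : (4 : ZMod ℓ) = 2 * 2 := by norm_num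
              rw [he]; exact mul_ne_zero h2zm h2zm
            refine mul_left_cancel₀ h4zm ?_
            linear_combination (2 * X + (a - b) + 2 * b) * h2X + hab' + b ^ 2 * hczm
          obtain ⟨x₀, hx₀⟩ := ZMod.intCast_surjective (n := ℓ) X
          obtain ⟨y₀, hy₀⟩ := ZMod.intCast_surjective (n := ℓ) b
          have hM : (ℓ : ℤ) ∣ (q : ℤ) * (x₀ ^ 2 + x₀ * y₀ + c * y₀ ^ 2) - (ℓ' : ℤ) := by
            rw [← ZMod.intCast_zmod_eq_zero_iff_dvd]
            push_cast
            rw [hx₀, hy₀, hval, hw]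
            field_simp
            ring
          obtain ⟨d₁, hd₁⟩ : ∃ d : ℤ, d = 2 * x₀ + y₀ := ⟨_, rfl⟩
          obtain ⟨d₂, hd₂⟩ : ∃ d : ℤ, d = x₀ + 2 * c * y₀ := ⟨_, rfl⟩
          have hgrad : ¬ (ℓ : ℤ) ∣ d₁ ∨ ¬ (ℓ : ℤ) ∣ d₂ := by
            by_contra hcon
            push_neg at hcon
            obtain ⟨h1, h2⟩ := hcon
            have e1 : 2 * X + b = 0 := by
              have h0 := (ZMod.intCast_zmod_eq_zero_iff_dvd d₁ ℓ).mpr h1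
              rw [hd₁] at h0
              push_cast at h0
              rw [hx₀, hy₀] at h0
              exact h0
            have e2 : X + 2 * ((c : ℤ) : ZMod ℓ) * b = 0 := by
              have h0 := (ZMod.intCast_zmod_eq_zero_iff_dvd d₂ ℓ).mpr h2
              rw [hd₂] at h0
              push_cast at h0
              rw [hx₀, hy₀] at h0
              exact h0
            have hb0 : b = 0 := by
              have h3 : ((q : ℕ) : ZMod ℓ) * b = 0 := by
                linear_combination b * hczm + e1 - 2 * e2
              rcases mul_eq_zero.mp h3 with h | h
              · exact absurd h hqzm
              · exact h
            have hX0 : X = 0 := by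
              have h3 : (2 : ZMod ℓ) * X = 0 := by rw [← e1, hb0]; ring
              rcases mul_eq_zero.mp h3 with h | h
              · exact absurd h h2zm
              · exact h
            rw [hb0, hX0] at hval
            simp at hval
            exact hw0 hval.symm
          rcases hgrad with hgd | hgd
          · -- Hensel in the first variable
            obtain ⟨x, hxn, hroot⟩ := quad_hensel (1 : ℚ_[ℓ]) ((y₀ : ℤ) : ℚ_[ℓ])
              (((c : ℤ) : ℚ_[ℓ]) * ((y₀ : ℤ) : ℚ_[ℓ]) ^ 2 - (ℓ' : ℚ_[ℓ]) / (q : ℚ_[ℓ]))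
              ((x₀ : ℤ) : ℚ_[ℓ])
              norm_one.le (pint y₀)
              (psub (pmul (pint c)
                (by rw [norm_pow]; exact pow_le_one₀ (norm_nonneg _) (pint y₀))) htnorm)
              (pint x₀)
              (by
                have he : (1 : ℚ_[ℓ]) * ((x₀ : ℤ) : ℚ_[ℓ]) ^ 2
                    + ((y₀ : ℤ) : ℚ_[ℓ]) * ((x₀ : ℤ) : ℚ_[ℓ])
                    + (((c : ℤ) : ℚ_[ℓ]) * ((y₀ : ℤ) : ℚ_[ℓ]) ^ 2 - (ℓ' : ℚ_[ℓ]) / (q : ℚ_[ℓ]))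
                    = (((q : ℤ) * (x₀ ^ 2 + x₀ * y₀ + c * y₀ ^ 2) - (ℓ' : ℤ) : ℤ) : ℚ_[ℓ])
                      / ((q : ℕ) : ℚ_[ℓ]) := by
                  rw [eq_div_iff hqne]
                  push_cast
                  field_simp
                  ring
                rw [he, norm_div, hqcast, hqunit, div_one]
                exact pint_lt hM)
              (by
                have he : 2 * (1 : ℚ_[ℓ]) * ((x₀ : ℤ) : ℚ_[ℓ]) + ((y₀ : ℤ) : ℚ_[ℓ])
                    = ((d₁ : ℤ) : ℚ_[ℓ]) := by
                  rw [hd₁]; push_cast; ring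
                rw [he]
                exact pint_one hgd)
            exact ⟨x, ((y₀ : ℤ) : ℚ_[ℓ]), psub hxn hκ₁n, psub (pint y₀) hκ₂n,
              by linear_combination hroot⟩
          · -- Hensel in the second variable
            obtain ⟨y, hyn, hroot⟩ := quad_hensel (((c : ℤ) : ℚ_[ℓ])) ((x₀ : ℤ) : ℚ_[ℓ])
              (((x₀ : ℤ) : ℚ_[ℓ]) ^ 2 - (ℓ' : ℚ_[ℓ]) / (q : ℚ_[ℓ]))
              ((y₀ : ℤ) : ℚ_[ℓ])
              (pint c) (pint x₀)
              (psub (by rw [norm_pow]; exact pow_le_one₀ (norm_nonneg _) (pint x₀)) htnorm)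
              (pint y₀)
              (by
                have he : ((c : ℤ) : ℚ_[ℓ]) * ((y₀ : ℤ) : ℚ_[ℓ]) ^ 2
                    + ((x₀ : ℤ) : ℚ_[ℓ]) * ((y₀ : ℤ) : ℚ_[ℓ])
                    + (((x₀ : ℤ) : ℚ_[ℓ]) ^ 2 - (ℓ' : ℚ_[ℓ]) / (q : ℚ_[ℓ]))
                    = (((q : ℤ) * (x₀ ^ 2 + x₀ * y₀ + c * y₀ ^ 2) - (ℓ' : ℤ) : ℤ) : ℚ_[ℓ])
                      / ((q : ℕ) : ℚ_[ℓ]) := by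
                  rw [eq_div_iff hqne]
                  push_cast
                  field_simp
                  ring
                rw [he, norm_div, hqcast, hqunit, div_one]
                exact pint_lt hM)
              (by
                have he : 2 * ((c : ℤ) : ℚ_[ℓ]) * ((y₀ : ℤ) : ℚ_[ℓ]) + ((x₀ : ℤ) : ℚ_[ℓ])
                    = ((d₂ : ℤ) : ℚ_[ℓ]) := by
                  rw [hd₂]; push_cast; ring
                rw [he]
                exact pint_one hgd)
            exact ⟨((x₀ : ℤ) : ℚ_[ℓ]), y, psub (pint x₀) hκ₁n, psub hyn hκ₂n,
              by linear_combination hroot⟩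
  · -- reverse direction
    intro h
    set r : ℚ := Qf κ₁ κ₂ - (ℓ' : ℚ) / (q : ℚ) with hr
    have hrQ : r = κ₁ ^ 2 + κ₁ * κ₂ + (c : ℚ) * κ₂ ^ 2 - (ℓ' : ℚ) / (q : ℚ) := by
      rw [hr, hQf]
    have hden : r.den = 1 := by
      rw [Nat.eq_one_iff_not_exists_prime_dvd]
      intro p hp hdvd
      haveI : Fact p.Prime := ⟨hp⟩
      obtain ⟨x, y, hx, hy, hxy⟩ := h p
      have hk1 : 2 * (κ₁ : ℚ_[p]) + (κ₂ : ℚ_[p]) = ((b₁ : ℤ) : ℚ_[p]) := by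
        have := congrArg (fun t : ℚ => (t : ℚ_[p])) hb₁'
        push_cast at this ⊢
        exact this
      have hk2 : (κ₁ : ℚ_[p]) + 2 * ((c : ℤ) : ℚ_[p]) * (κ₂ : ℚ_[p]) = ((b₂ : ℤ) : ℚ_[p]) := by
        have := congrArg (fun t : ℚ => (t : ℚ_[p])) hb₂'
        push_cast at this ⊢
        exact this
      have hrp : ((r : ℚ) : ℚ_[p]) = (κ₁ : ℚ_[p]) ^ 2 + (κ₁ : ℚ_[p]) * (κ₂ : ℚ_[p])
          + ((c : ℤ) : ℚ_[p]) * (κ₂ : ℚ_[p]) ^ 2 - (ℓ' : ℚ_[p]) / (q : ℚ_[p]) := by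
        have := congrArg (fun t : ℚ => (t : ℚ_[p])) hrQ
        push_cast at this ⊢
        exact this
      have key : ((r : ℚ) : ℚ_[p]) = -((x - κ₁) * ((b₁ : ℤ) : ℚ_[p]) + (y - κ₂) * ((b₂ : ℤ) : ℚ_[p])
          + (x - κ₁) ^ 2 + (x - κ₁) * (y - κ₂) + ((c : ℤ) : ℚ_[p]) * (y - κ₂) ^ 2) := by
        have hxy' : x ^ 2 + x * y + ((c : ℤ) : ℚ_[p]) * y ^ 2 = (ℓ' : ℚ_[p]) / (q : ℚ_[p]) := by
          push_cast at hxy ⊢; exact hxy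
        linear_combination hrp + hxy' - (x - κ₁) * hk1 - (y - κ₂) * hk2
      have hsq : ∀ a : ℚ_[p], ‖a‖ ≤ 1 → ‖a ^ 2‖ ≤ 1 := fun a ha => by
        rw [norm_pow]; exact pow_le_one₀ (norm_nonneg _) ha
      have hrle : ‖((r : ℚ) : ℚ_[p])‖ ≤ 1 := by
        rw [key, norm_neg]
        exact padd (padd (padd (padd (pmul hx (pint b₁)) (pmul hy (pint b₂)))
          (hsq _ hx)) (pmul hx hy)) (pmul (pint c) (hsq _ hy))
      -- contradiction with p ∣ r.den
      have hnum : ¬ (p : ℤ) ∣ r.num := by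
        intro hd
        have h1 : p ∣ r.num.natAbs := by
          have := Int.natAbs_dvd_natAbs.mpr hd
          simpa using this
        have h2 := Nat.dvd_gcd h1 hdvd
        rw [Nat.Coprime.gcd_eq_one r.reduced] at h2
        exact hp.one_lt.ne' (Nat.dvd_one.mp h2)
      have h1 : ‖((r.num : ℤ) : ℚ_[p])‖ = 1 := pint_one hnum
      have hd0 : (r.den : ℚ) ≠ 0 := Nat.cast_ne_zero.mpr r.den_nz
      have hcast : ((r.num : ℤ) : ℚ_[p]) = ((r : ℚ) : ℚ_[p]) * ((r.den : ℤ) : ℚ_[p]) := by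
        have hQ : (r.num : ℚ) = r * (r.den : ℚ) := by
          rw [Rat.mul_den_eq_num]
        have := congrArg (fun t : ℚ => (t : ℚ_[p])) hQ
        push_cast at this ⊢
        exact this
      have hdenlt : ‖((r.den : ℤ) : ℚ_[p])‖ < 1 := pint_lt (by exact_mod_cast hdvd)
      rw [hcast, norm_mul] at h1
      have : ‖((r : ℚ) : ℚ_[p])‖ * ‖((r.den : ℤ) : ℚ_[p])‖ < 1 := by
        calc ‖((r : ℚ) : ℚ_[p])‖ * ‖((r.den : ℤ) : ℚ_[p])‖
            ≤ 1 * ‖((r.den : ℤ) : ℚ_[p])‖ := by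
              exact mul_le_mul_of_nonneg_right hrle (norm_nonneg _)
          _ < 1 := by rwa [one_mul]
      rw [h1] at this
      exact lt_irrefl 1 this
    refine ⟨r.num, ?_⟩
    rw [← Rat.num_div_den r, hden]
    simp
end
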